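/- arXiv:2002.08561 — 6 statements merged into one kernel-verified Lean document; each statement's English description precedes it below -/
import Mathlib

section
/- Let A ∈ ℝ^{m×N}, b ∈ ℝ^m, E ∈ ℝ^{r×N}, C a polyhedral set in ℝ^N, q > 1, and let ‖·‖⋆ be a norm on ℝ^r. Consider the problem (P₂): min_{x ∈ C} (1/2)‖Ax − b‖_q^q + ‖Ex‖⋆. If x and x' are both minimizers of (P₂), then Ax = Ax' and ‖Ex‖⋆ = ‖Ex'‖⋆. -/
open Finset

lemma abs_rpow_midpoint_le (q : ℝ) (hq : 1 < q) (a b : ℝ) :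
    |(a + b) / 2| ^ q ≤ (|a| ^ q + |b| ^ q) / 2 := by
  have h1 : |(a + b) / 2| ≤ (|a| + |b|) / 2 := by
    rw [abs_div]
    simp only [abs_two]
    exact div_le_div_of_nonneg_right (abs_add_le a b) (by norm_num) |>.trans_eq rfl
  have h2 : |(a + b) / 2| ^ q ≤ ((|a| + |b|) / 2) ^ q :=
    Real.rpow_le_rpow (abs_nonneg _) h1 (by linarith)
  refine h2.trans ?_
  have := (strictConvexOn_rpow hq).convexOn.2 (Set.mem_Ici.2 (abs_nonneg a))
    (Set.mem_Ici.2 (abs_nonneg b)) (by norm_num : (0:ℝ) ≤ 1/2) (by norm_num : (0:ℝ) ≤ 1/2)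
    (by norm_num)
  simp only [smul_eq_mul] at this
  calc ((|a| + |b|) / 2) ^ q = (1/2 * |a| + 1/2 * |b|) ^ q := by ring_nf
    _ ≤ 1/2 * |a| ^ q + 1/2 * |b| ^ q := this
    _ = (|a| ^ q + |b| ^ q) / 2 := by ring

lemma abs_rpow_midpoint_lt (q : ℝ) (hq : 1 < q) (a b : ℝ) (hab : a ≠ b) :
    |(a + b) / 2| ^ q < (|a| ^ q + |b| ^ q) / 2 := by
  by_cases h : |a| = |b|
  · have hb : a = -b := by
      rcases abs_eq_abs.1 h with h' | h'
      · exact absurd h' hab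
      · exact h'
    have hbne : b ≠ 0 := by rintro rfl; exact hab (by simpa using hb)
    have : (a + b) / 2 = 0 := by rw [hb]; ring
    rw [this, abs_zero, Real.zero_rpow (by linarith)]
    have : 0 < |b| ^ q := Real.rpow_pos_of_pos (abs_pos.2 hbne) q
    rw [h]
    linarith
  · have h1 : |(a + b) / 2| ^ q ≤ ((|a| + |b|) / 2) ^ q :=
      Real.rpow_le_rpow (abs_nonneg _)
        (by rw [abs_div]; simp only [abs_two];
            exact div_le_div_of_nonneg_right (abs_add_le a b) (by norm_num)) (by linarith)
    refine h1.trans_lt ?_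
    have := (strictConvexOn_rpow hq).2 (Set.mem_Ici.2 (abs_nonneg a))
      (Set.mem_Ici.2 (abs_nonneg b)) h (by norm_num : (0:ℝ) < 1/2)
      (by norm_num : (0:ℝ) < 1/2) (by norm_num)
    simp only [smul_eq_mul] at this
    calc ((|a| + |b|) / 2) ^ q = (1/2 * |a| + 1/2 * |b|) ^ q := by ring_nf
      _ < 1/2 * |a| ^ q + 1/2 * |b| ^ q := this
      _ = (|a| ^ q + |b| ^ q) / 2 := by ring

/-- For the problem (P₂): min over the polyhedral set 𝒞 of
`(1/2)‖Ax − b‖_q^q + ‖Ex‖⋆` with `q > 1`, any two minimizers `x, x'` satisfy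
`Ax = Ax'` and `‖Ex‖⋆ = ‖Ex'‖⋆`. -/
theorem stmt4 {m N r ℓ : ℕ} (q : ℝ) (hq : 1 < q)
    (A : Matrix (Fin m) (Fin N) ℝ) (b : Fin m → ℝ) (E : Matrix (Fin r) (Fin N) ℝ)
    (Cm : Matrix (Fin ℓ) (Fin N) ℝ) (d : Fin ℓ → ℝ)
    (nstar : (Fin r → ℝ) → ℝ)
    (hns1 : ∀ u v, nstar (u + v) ≤ nstar u + nstar v)
    (hns2 : ∀ (c : ℝ) u, nstar (c • u) = |c| * nstar u)
    (hns3 : ∀ u, nstar u = 0 → u = 0)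
    (𝒞 : Set (Fin N → ℝ)) (h𝒞 : 𝒞 = {x | ∀ i, Cm.mulVec x i ≤ d i})
    (J : (Fin N → ℝ) → ℝ)
    (hJ : J = fun x => (1/2) * (∑ i, |A.mulVec x i - b i| ^ q) + nstar (E.mulVec x))
    (x x' : Fin N → ℝ) (hx : x ∈ 𝒞) (hx' : x' ∈ 𝒞)
    (hxm : ∀ y ∈ 𝒞, J x ≤ J y) (hx'm : ∀ y ∈ 𝒞, J x' ≤ J y) :
    A.mulVec x = A.mulVec x' ∧ nstar (E.mulVec x) = nstar (E.mulVec x') := by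
  set z : Fin N → ℝ := (1/2 : ℝ) • (x + x') with hz
  have hzC : z ∈ 𝒞 := by
    rw [h𝒞]; intro i
    rw [h𝒞] at hx hx'
    have : Cm.mulVec z i = (1/2) * (Cm.mulVec x i + Cm.mulVec x' i) := by
      simp [hz, Matrix.mulVec_smul, Matrix.mulVec_add]
      ring
    rw [this]
    have := hx i; have := hx' i
    linarith
  have hAz : ∀ i, A.mulVec z i - b i = ((A.mulVec x i - b i) + (A.mulVec x' i - b i)) / 2 := by
    intro i
    simp [hz, Matrix.mulVec_smul, Matrix.mulVec_add]
    ring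
  have hEz : E.mulVec z = (1/2 : ℝ) • (E.mulVec x + E.mulVec x') := by
    simp [hz, Matrix.mulVec_smul, Matrix.mulVec_add]
  have hns : nstar (E.mulVec z) ≤ (nstar (E.mulVec x) + nstar (E.mulVec x')) / 2 := by
    rw [hEz, hns2]
    have := hns1 (E.mulVec x) (E.mulVec x')
    rw [abs_of_pos (by norm_num : (0:ℝ) < 1/2)]
    linarith
  have hJeq : J x = J x' := le_antisymm (hxm x' hx') (hx'm x hx)
  have hsum_le : ∀ i, |A.mulVec z i - b i| ^ q ≤
      (|A.mulVec x i - b i| ^ q + |A.mulVec x' i - b i| ^ q) / 2 := fun i => by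
    rw [hAz i]; exact abs_rpow_midpoint_le q hq _ _
  -- main claim: A x = A x'
  have hA : A.mulVec x = A.mulVec x' := by
    by_contra hne
    obtain ⟨i₀, hi₀⟩ : ∃ i, A.mulVec x i ≠ A.mulVec x' i := by
      by_contra h; push_neg at h; exact hne (funext h)
    have hstrict : ∑ i, |A.mulVec z i - b i| ^ q <
        ∑ i, (|A.mulVec x i - b i| ^ q + |A.mulVec x' i - b i| ^ q) / 2 := by
      apply Finset.sum_lt_sum (fun i _ => hsum_le i)
      refine ⟨i₀, Finset.mem_univ _, ?_⟩
      rw [hAz i₀]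
      exact abs_rpow_midpoint_lt q hq _ _ (by intro h; apply hi₀; linarith)
    have hJeq' := hJeq
    rw [hJ] at hJeq'
    simp only at hJeq'
    have hJz : J z < J x := by
      rw [hJ]
      simp only
      have hsplit : ∑ i, (|A.mulVec x i - b i| ^ q + |A.mulVec x' i - b i| ^ q) / 2
          = (∑ i, |A.mulVec x i - b i| ^ q + ∑ i, |A.mulVec x' i - b i| ^ q) / 2 := by
        rw [← Finset.sum_add_distrib, ← Finset.sum_div]
      rw [hsplit] at hstrict
      nlinarith [hns, hstrict, hJeq']
    exact absurd (hxm z hzC) (not_le.2 hJz)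
  refine ⟨hA, ?_⟩
  rw [hJ] at hJeq
  simp only at hJeq
  rw [hA] at hJeq
  linarith [hJeq]
end

section
/- Let x* be a minimizer of (P₂): min_{x∈C} (1/2)‖Ax − b‖_q^q + ‖Ex‖⋆, with q > 1 and C polyhedral. Then z* is a minimizer of (P₂) if and only if z* is a minimizer of the BP-like problem (P₁): min ‖Ez‖⋆ subject to Az = Ax* and z ∈ C; moreover the optimal value of (P₁) equals ‖Ex*‖⋆. -/
open Real Set

lemma abs_mid_rpow_le' {q : ℝ} (hq : 1 < q) (a b : ℝ) :
    |(a + b)/2| ^ q ≤ (|a| ^ q + |b| ^ q) / 2 := by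
  have h0 : (0:ℝ) ≤ q := by linarith
  have h1 : |(a + b)/2| ≤ (|a| + |b|)/2 := by
    rw [abs_div, abs_two]
    gcongr
    exact abs_add_le a b
  have h2 : |(a + b)/2| ^ q ≤ ((|a| + |b|)/2) ^ q :=
    Real.rpow_le_rpow (abs_nonneg _) h1 h0
  refine h2.trans ?_
  have := (convexOn_rpow hq.le).2 (mem_Ici.2 (abs_nonneg a)) (mem_Ici.2 (abs_nonneg b))
    (by norm_num : (0:ℝ) ≤ (1:ℝ)/2) (by norm_num : (0:ℝ) ≤ (1:ℝ)/2) (by norm_num)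
  simp only [smul_eq_mul] at this
  calc ((|a| + |b|)/2) ^ q = ((1:ℝ)/2 * |a| + (1:ℝ)/2 * |b|) ^ q := by ring_nf
    _ ≤ (1:ℝ)/2 * |a| ^ q + (1:ℝ)/2 * |b| ^ q := this
    _ = (|a| ^ q + |b| ^ q) / 2 := by ring

lemma abs_mid_rpow_lt' {q : ℝ} (hq : 1 < q) {a b : ℝ} (hab : a ≠ b) :
    |(a + b)/2| ^ q < (|a| ^ q + |b| ^ q) / 2 := by
  have h0 : (0:ℝ) ≤ q := by linarith
  by_cases hab2 : |a| = |b|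
  · -- then a = -b, a ≠ 0
    have hb : a = -b := by
      rcases abs_eq_abs.1 hab2 with h | h
      · exact absurd h hab
      · exact h
    have ha0 : a ≠ 0 := by rintro rfl; simp at hb; exact hab (by simp [hb.symm])
    have : (a + b)/2 = 0 := by rw [hb]; ring
    rw [this, abs_zero, Real.zero_rpow (by linarith)]
    have : 0 < |a| ^ q := Real.rpow_pos_of_pos (abs_pos.2 ha0) q
    rw [← hab2]
    linarith
  · have h1 : |(a + b)/2| ≤ (|a| + |b|)/2 := by
      rw [abs_div, abs_two]; gcongr; exact abs_add_le a b
    have h2 : |(a + b)/2| ^ q ≤ ((|a| + |b|)/2) ^ q :=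
      Real.rpow_le_rpow (abs_nonneg _) h1 h0
    refine h2.trans_lt ?_
    have := (strictConvexOn_rpow hq).2 (mem_Ici.2 (abs_nonneg a)) (mem_Ici.2 (abs_nonneg b))
      hab2 (by norm_num : (0:ℝ) < (1:ℝ)/2) (by norm_num : (0:ℝ) < (1:ℝ)/2) (by norm_num)
    simp only [smul_eq_mul] at this
    calc ((|a| + |b|)/2) ^ q = ((1:ℝ)/2 * |a| + (1:ℝ)/2 * |b|) ^ q := by ring_nf
      _ < (1:ℝ)/2 * |a| ^ q + (1:ℝ)/2 * |b| ^ q := this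
      _ = (|a| ^ q + |b| ^ q) / 2 := by ring

/-- Let `xstar` be a minimizer of (P₂): min over 𝒞 of `(1/2)‖Ax−b‖_q^q + ‖Ex‖⋆`
with `q > 1`. Then `z` is a minimizer of (P₂) iff `z` is a minimizer of the
BP-like problem (P₁): min `‖Ez‖⋆` s.t. `Az = A xstar`, `z ∈ 𝒞`; moreover the
optimal value of (P₁) equals `‖E xstar‖⋆`. -/
theorem stmt5 {m N r ℓ : ℕ} (q : ℝ) (hq : 1 < q)
    (A : Matrix (Fin m) (Fin N) ℝ) (b : Fin m → ℝ) (E : Matrix (Fin r) (Fin N) ℝ)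
    (Cm : Matrix (Fin ℓ) (Fin N) ℝ) (d : Fin ℓ → ℝ)
    (nstar : (Fin r → ℝ) → ℝ)
    (hns1 : ∀ u v, nstar (u + v) ≤ nstar u + nstar v)
    (hns2 : ∀ (c : ℝ) u, nstar (c • u) = |c| * nstar u)
    (hns3 : ∀ u, nstar u = 0 → u = 0)
    (𝒞 : Set (Fin N → ℝ)) (h𝒞 : 𝒞 = {x | ∀ i, Cm.mulVec x i ≤ d i})
    (J : (Fin N → ℝ) → ℝ)
    (hJ : J = fun x => (1/2) * (∑ i, |A.mulVec x i - b i| ^ q) + nstar (E.mulVec x))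
    (xstar : Fin N → ℝ) (hxs : xstar ∈ 𝒞) (hxsm : ∀ y ∈ 𝒞, J xstar ≤ J y) :
    (∀ z, (z ∈ 𝒞 ∧ ∀ y ∈ 𝒞, J z ≤ J y) ↔
      (z ∈ 𝒞 ∧ A.mulVec z = A.mulVec xstar ∧
        ∀ y, y ∈ 𝒞 → A.mulVec y = A.mulVec xstar →
          nstar (E.mulVec z) ≤ nstar (E.mulVec y))) ∧
    sInf {v : ℝ | ∃ z, z ∈ 𝒞 ∧ A.mulVec z = A.mulVec xstar ∧ v = nstar (E.mulVec z)}
      = nstar (E.mulVec xstar) := by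
  set f : (Fin N → ℝ) → ℝ := fun x => ∑ i, |A.mulVec x i - b i| ^ q with hf
  have hJ' : ∀ x, J x = (1/2) * f x + nstar (E.mulVec x) := fun x => by rw [hJ]
  -- key: any minimizer z satisfies A z = A xstar
  have key : ∀ z, z ∈ 𝒞 → (∀ y ∈ 𝒞, J z ≤ J y) → A.mulVec z = A.mulVec xstar := by
    intro z hz hzm
    by_contra hne
    set w : Fin N → ℝ := (1/2 : ℝ) • (z + xstar) with hw
    have hAw : ∀ (k : ℕ) (M : Matrix (Fin k) (Fin N) ℝ), M.mulVec w = (1/2 : ℝ) • (M.mulVec z + M.mulVec xstar) := by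
      intro k M
      rw [hw, Matrix.mulVec_smul, Matrix.mulVec_add]
    have hwC : w ∈ 𝒞 := by
      rw [h𝒞]; intro i
      have h1 : Cm.mulVec z i ≤ d i := (h𝒞 ▸ hz) i
      have h2 : Cm.mulVec xstar i ≤ d i := (h𝒞 ▸ hxs) i
      have := congrFun (hAw ℓ Cm) i
      simp only [Pi.smul_apply, Pi.add_apply, smul_eq_mul] at this
      rw [this]; linarith
    have hfw : f w < (f z + f xstar) / 2 := by
      have hterm : ∀ i, |A.mulVec w i - b i| ^ q
          ≤ (|A.mulVec z i - b i| ^ q + |A.mulVec xstar i - b i| ^ q) / 2 := by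
        intro i
        have := congrFun (hAw m A) i
        simp only [Pi.smul_apply, Pi.add_apply, smul_eq_mul] at this
        have h3 : A.mulVec w i - b i = ((A.mulVec z i - b i) + (A.mulVec xstar i - b i)) / 2 := by
          rw [this]; ring
        rw [h3]
        exact abs_mid_rpow_le' hq _ _
      obtain ⟨i0, hi0⟩ : ∃ i, A.mulVec z i ≠ A.mulVec xstar i := by
        by_contra h; push_neg at h; exact hne (funext h)
      have hlt : |A.mulVec w i0 - b i0| ^ q
          < (|A.mulVec z i0 - b i0| ^ q + |A.mulVec xstar i0 - b i0| ^ q) / 2 := by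
        have := congrFun (hAw m A) i0
        simp only [Pi.smul_apply, Pi.add_apply, smul_eq_mul] at this
        have h3 : A.mulVec w i0 - b i0 = ((A.mulVec z i0 - b i0) + (A.mulVec xstar i0 - b i0)) / 2 := by
          rw [this]; ring
        rw [h3]
        exact abs_mid_rpow_lt' hq (by intro h; apply hi0; linarith)
      calc f w = ∑ i, |A.mulVec w i - b i| ^ q := rfl
        _ < ∑ i, (|A.mulVec z i - b i| ^ q + |A.mulVec xstar i - b i| ^ q) / 2 :=
          Finset.sum_lt_sum (fun i _ => hterm i) ⟨i0, Finset.mem_univ i0, hlt⟩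
        _ = (f z + f xstar) / 2 := by
          rw [hf]; rw [← Finset.sum_div, Finset.sum_add_distrib]
    have hnw : nstar (E.mulVec w) ≤ (nstar (E.mulVec z) + nstar (E.mulVec xstar)) / 2 := by
      rw [hAw r E, hns2]
      have := hns1 (E.mulVec z) (E.mulVec xstar)
      have h2 : |(1/2 : ℝ)| = 1/2 := by norm_num
      rw [h2]; linarith
    have hJeq : J z = J xstar := le_antisymm (hzm xstar hxs) (hxsm z hz)
    have : J w < J xstar := by
      rw [hJ' w, hJ' z, hJ' xstar] at *
      linarith [hJeq]
    exact absurd (hxsm w hwC) (not_le.2 this)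
  -- f is constant on {Az = Axstar}
  have hfc : ∀ y, A.mulVec y = A.mulVec xstar → f y = f xstar := by
    intro y hy; rw [hf]; simp only [hy]
  constructor
  · intro z
    constructor
    · rintro ⟨hz, hzm⟩
      have hAz := key z hz hzm
      refine ⟨hz, hAz, fun y hy hAy => ?_⟩
      have h1 := hzm y hy
      rw [hJ' z, hJ' y, hfc z hAz, hfc y hAy] at h1
      linarith
    · rintro ⟨hz, hAz, hopt⟩
      refine ⟨hz, fun y hy => ?_⟩
      have h1 : nstar (E.mulVec z) ≤ nstar (E.mulVec xstar) := hopt xstar hxs rfl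
      have h2 : J z ≤ J xstar := by
        rw [hJ' z, hJ' xstar, hfc z hAz]; linarith
      exact h2.trans (hxsm y hy)
  · apply IsLeast.csInf_eq
    constructor
    · exact ⟨xstar, hxs, rfl, rfl⟩
    · rintro v ⟨z, hz, hAz, rfl⟩
      have h1 := hxsm z hz
      rw [hJ' z, hJ' xstar, hfc z hAz] at h1
      linarith
end

section
/- Let P be a polyhedral set in ℝ^N, f : ℝ^N → ℝ a convex piecewise affine function (i.e. f(x) = max_{i=1..ℓ}(p_iᵀx + γ_i)) such that min_{x∈P} f(x) has a nonempty solution set, and h : ℝ^N → ℝ a coercive convex function. Then there exists ε̄ > 0 such that for every ε ∈ (0, ε̄], every minimizer of min_{x∈P} f(x) + ε h(x) is a minimizer of min_{x∈P} f(x) (exact regularization). -/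
set_option maxHeartbeats 1000000
open scoped RealInnerProductSpace

lemma pattern_bound {E : Type*} [NormedAddCommGroup E] [InnerProductSpace ℝ E] [ProperSpace E]
    {ι κ : Type*} (q : ι → E) (c : κ → E) (I : Finset ι) (J : Finset κ) :
    ∃ a > (0:ℝ), ∀ u : E, ‖u‖ = 1 → (∀ j ∈ J, ⟪c j, u⟫ ≤ 0) →
      (∀ v : E, (∀ j ∈ J, ⟪c j, v⟫ ≤ 0) → (∀ i ∈ I, ⟪q i, v⟫ ≤ 0) → ⟪u, v⟫ ≤ 0) →
      ∃ i ∈ I, a ≤ ⟪q i, u⟫ := by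
  classical
  set Z : Set E := {u : E | ‖u‖ = 1} ∩ ((⋂ j ∈ J, {u : E | ⟪c j, u⟫ ≤ 0}) ∩
      (⋂ v ∈ {v : E | (∀ j ∈ J, ⟪c j, v⟫ ≤ 0) ∧ ∀ i ∈ I, ⟪q i, v⟫ ≤ 0},
        {u : E | ⟪u, v⟫ ≤ 0})) with hZ
  have hmemZ : ∀ u : E, u ∈ Z ↔ (‖u‖ = 1 ∧ (∀ j ∈ J, ⟪c j, u⟫ ≤ 0) ∧
      ∀ v : E, (∀ j ∈ J, ⟪c j, v⟫ ≤ 0) → (∀ i ∈ I, ⟪q i, v⟫ ≤ 0) → ⟪u, v⟫ ≤ 0) := by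
    intro u
    simp only [hZ, Set.mem_inter_iff, Set.mem_setOf_eq, Set.mem_iInter]
    constructor
    · rintro ⟨h1, h2, h3⟩
      exact ⟨h1, h2, fun v hv1 hv2 => h3 v ⟨hv1, hv2⟩⟩
    · rintro ⟨h1, h2, h3⟩
      exact ⟨h1, h2, fun v hv => h3 v hv.1 hv.2⟩
  have hpos : ∀ u ∈ Z, ∃ i ∈ I, 0 < ⟪q i, u⟫ := by
    intro u hu
    rw [hmemZ] at hu
    obtain ⟨h1, h2, h3⟩ := hu
    by_contra hcon
    push_neg at hcon
    have : ⟪u, u⟫ ≤ 0 := h3 u h2 (fun i hi => hcon i hi)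
    have hu0 : u = 0 := real_inner_self_nonpos.mp this
    rw [hu0] at h1; simp at h1
  by_cases hZne : Z.Nonempty
  · have hIne : I.Nonempty := by
      obtain ⟨u, hu⟩ := hZne
      obtain ⟨i, hi, _⟩ := hpos u hu
      exact ⟨i, hi⟩
    have hZcl : IsClosed Z := by
      refine IsClosed.inter (isClosed_eq continuous_norm continuous_const) (IsClosed.inter ?_ ?_)
      · exact isClosed_biInter fun j _ =>
          isClosed_le (Continuous.inner continuous_const continuous_id) continuous_const
      · exact isClosed_biInter fun v _ =>
          isClosed_le (Continuous.inner continuous_id continuous_const) continuous_const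
    have hZcp : IsCompact Z := by
      refine (isCompact_sphere (0:E) 1).of_isClosed_subset hZcl ?_
      intro u hu
      rw [hmemZ] at hu
      simpa [mem_sphere_iff_norm] using hu.1
    have hgc : Continuous fun u : E => I.sup' hIne fun i => ⟪q i, u⟫ := by
      refine Continuous.finset_sup'_apply hIne fun i _ => ?_
      exact Continuous.inner continuous_const continuous_id
    obtain ⟨u₀, hu₀Z, hu₀min⟩ := hZcp.exists_isMinOn hZne hgc.continuousOn
    set a := I.sup' hIne fun i => ⟪q i, u₀⟫ with ha
    have hapos : 0 < a := by
      obtain ⟨i, hi, hqi⟩ := hpos u₀ hu₀Z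
      exact lt_of_lt_of_le hqi (Finset.le_sup' (fun i => ⟪q i, u₀⟫) hi)
    refine ⟨a, hapos, fun u h1 h2 h3 => ?_⟩
    have huZ : u ∈ Z := (hmemZ u).mpr ⟨h1, h2, h3⟩
    have := hu₀min huZ
    obtain ⟨i, hi, hieq⟩ := Finset.exists_mem_eq_sup' hIne fun i => ⟪q i, u⟫
    exact ⟨i, hi, by rw [← hieq]; exact this⟩
  · refine ⟨1, one_pos, fun u h1 h2 h3 => ?_⟩
    exact absurd ((hmemZ u).mpr ⟨h1, h2, h3⟩) (fun hu => hZne ⟨u, hu⟩)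

/-- Exact regularization of a convex piecewise affine objective over a polyhedral
set: there is `ε̄ > 0` such that for all `ε ∈ (0, ε̄]`, every minimizer of
`f + ε h` over `P` is a minimizer of `f` over `P`. -/
theorem stmt6 {N ℓc r : ℕ} (Cm : Matrix (Fin ℓc) (Fin N) ℝ) (d : Fin ℓc → ℝ)
    (P : Set (Fin N → ℝ)) (hP : P = {x | ∀ i, Cm.mulVec x i ≤ d i})
    (p : Fin (r + 1) → Fin N → ℝ) (γ : Fin (r + 1) → ℝ)
    (f : (Fin N → ℝ) → ℝ)
    (hf : ∀ x, f x = Finset.univ.sup' Finset.univ_nonempty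
      (fun i => (∑ j, p i j * x j) + γ i))
    (h : (Fin N → ℝ) → ℝ) (hhcv : ConvexOn ℝ Set.univ h)
    (hcoer : ∀ M : ℝ, ∃ R : ℝ, ∀ x, R ≤ ‖x‖ → M ≤ h x)
    (hsol : ∃ x ∈ P, ∀ y ∈ P, f x ≤ f y) :
    ∃ εbar > (0 : ℝ), ∀ ε : ℝ, 0 < ε → ε ≤ εbar →
      ∀ x ∈ P, (∀ y ∈ P, f x + ε * h x ≤ f y + ε * h y) →
        ∀ y ∈ P, f x ≤ f y := by
  classical
  obtain ⟨xb, hxbP, hxbmin⟩ := hsol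
  set q : Fin (r+1) → EuclideanSpace ℝ (Fin N) := fun i => WithLp.toLp 2 (p i) with hqdef
  set c : Fin ℓc → EuclideanSpace ℝ (Fin N) := fun j => WithLp.toLp 2 (fun k => Cm j k) with hcdef
  set fstar := f xb with hfstar
  set xbE : EuclideanSpace ℝ (Fin N) := WithLp.toLp 2 xb with hxbEdef
  -- inner product formulas
  have hq : ∀ (i : Fin (r+1)) (x : EuclideanSpace ℝ (Fin N)), ⟪q i, x⟫ = ∑ j, p i j * x j := by
    intro i x
    simp [hqdef, PiLp.inner_apply, RCLike.inner_apply, conj_trivial, mul_comm]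
  have hc : ∀ (j : Fin ℓc) (x : EuclideanSpace ℝ (Fin N)), ⟪c j, x⟫ = Cm.mulVec x j := by
    intro j x
    simp [hcdef, PiLp.inner_apply, RCLike.inner_apply, conj_trivial,
      Matrix.mulVec, dotProduct, mul_comm]
  have hPmem : ∀ x : EuclideanSpace ℝ (Fin N), ⇑x ∈ P ↔ ∀ j, ⟪c j, x⟫ ≤ d j := by
    intro x
    rw [hP]
    constructor
    · intro hx j; rw [hc]; exact hx j
    · intro hx j; rw [← hc]; exact hx j
  have hfx : ∀ x : EuclideanSpace ℝ (Fin N), f x = Finset.univ.sup' Finset.univ_nonempty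
      (fun i => ⟪q i, x⟫ + γ i) := by
    intro x
    rw [hf x]
    refine Finset.sup'_congr _ rfl fun i _ => ?_
    rw [hq]
  -- the solution set as subset of EuclideanSpace ℝ (Fin N)
  set SE : Set (EuclideanSpace ℝ (Fin N)) := {x : EuclideanSpace ℝ (Fin N) | (∀ j, ⟪c j, x⟫ ≤ d j) ∧ (∀ i, ⟪q i, x⟫ + γ i ≤ fstar)} with hSE
  have hxbSE : xbE ∈ SE := by
    constructor
    · intro j; exact (hPmem xbE).mp hxbP j
    · intro i
      have := Finset.le_sup' (fun i => ⟪q i, xbE⟫ + γ i) (Finset.mem_univ i)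
      rw [← hfx xbE] at this
      exact this
  have hSEne : SE.Nonempty := ⟨xbE, hxbSE⟩
  have hSEconv : Convex ℝ SE := by
    intro x hx y hy a b ha hb hab
    constructor
    · intro j
      have hx1 := hx.1 j
      have hy1 := hy.1 j
      have : ⟪c j, a • x + b • y⟫ = a * ⟪c j, x⟫ + b * ⟪c j, y⟫ := by
        rw [inner_add_right, real_inner_smul_right, real_inner_smul_right]
      rw [this]
      have h3 : a * ⟪c j, x⟫ + b * ⟪c j, y⟫ ≤ a * d j + b * d j :=
        add_le_add (mul_le_mul_of_nonneg_left hx1 ha) (mul_le_mul_of_nonneg_left hy1 hb)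
      have h4 : a * d j + b * d j = d j := by rw [← add_mul, hab, one_mul]
      linarith
    · intro i
      have hx1 : ⟪q i, x⟫ ≤ fstar - γ i := by linarith [hx.2 i]
      have hy1 : ⟪q i, y⟫ ≤ fstar - γ i := by linarith [hy.2 i]
      have : ⟪q i, a • x + b • y⟫ = a * ⟪q i, x⟫ + b * ⟪q i, y⟫ := by
        rw [inner_add_right, real_inner_smul_right, real_inner_smul_right]
      rw [this]
      have h3 : a * ⟪q i, x⟫ + b * ⟪q i, y⟫ ≤ a * (fstar - γ i) + b * (fstar - γ i) :=
        add_le_add (mul_le_mul_of_nonneg_left hx1 ha) (mul_le_mul_of_nonneg_left hy1 hb)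
      have h4 : a * (fstar - γ i) + b * (fstar - γ i) = fstar - γ i := by
        rw [← add_mul, hab, one_mul]
      linarith
  have hSEcl : IsClosed SE := by
    have : SE = (⋂ j, {x : EuclideanSpace ℝ (Fin N) | ⟪c j, x⟫ ≤ d j}) ∩ (⋂ i, {x : EuclideanSpace ℝ (Fin N) | ⟪q i, x⟫ + γ i ≤ fstar}) := by
      ext x
      simp only [hSE, Set.mem_setOf_eq, Set.mem_inter_iff, Set.mem_iInter]
    rw [this]
    refine IsClosed.inter (isClosed_iInter fun j => ?_) (isClosed_iInter fun i => ?_)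
    · exact isClosed_le (Continuous.inner continuous_const continuous_id) continuous_const
    · exact isClosed_le ((Continuous.inner continuous_const continuous_id).add
        continuous_const) continuous_const
  -- pattern constants
  have hpat : ∀ IJ : Finset (Fin (r+1)) × Finset (Fin ℓc), ∃ a, 0 < a ∧
      ∀ u : EuclideanSpace ℝ (Fin N), ‖u‖ = 1 → (∀ j ∈ IJ.2, ⟪c j, u⟫ ≤ 0) →
      (∀ v : EuclideanSpace ℝ (Fin N), (∀ j ∈ IJ.2, ⟪c j, v⟫ ≤ 0) → (∀ i ∈ IJ.1, ⟪q i, v⟫ ≤ 0) → ⟪u, v⟫ ≤ 0) →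
      ∃ i ∈ IJ.1, a ≤ ⟪q i, u⟫ := by
    intro IJ
    obtain ⟨a, ha, hab⟩ := pattern_bound q c IJ.1 IJ.2
    exact ⟨a, ha, hab⟩
  choose a ha hab using hpat
  set α : ℝ := Finset.univ.inf' (Finset.univ_nonempty_iff.mpr ⟨(∅, ∅)⟩) a with hα
  have hαpos : 0 < α := by
    rw [hα, Finset.lt_inf'_iff]
    exact fun IJ _ => ha IJ
  have hαle : ∀ IJ, α ≤ a IJ := by
    intro IJ
    rw [hα]
    exact Finset.inf'_le a (Finset.mem_univ IJ)
  clear_value α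
  -- coercivity bound
  set M := h xb with hM
  obtain ⟨R₀, hR₀⟩ := hcoer (M + 1)
  set R := max R₀ 1 with hR
  have hRpos : (0:ℝ) < R := lt_of_lt_of_le one_pos (le_max_right _ _)
  have hhb : ∀ x : EuclideanSpace ℝ (Fin N), h x ≤ M → ∀ j, ‖x j‖ < R := by
    intro x hx j
    by_contra hcon
    push_neg at hcon
    have hc1 : ‖x j‖ ≤ ‖fun k => x k‖ := norm_le_pi_norm (f := fun k : Fin N => x k) j
    have hc2 : R₀ ≤ ‖x j‖ := le_trans (le_max_left _ _) hcon
    have : M + 1 ≤ h x := hR₀ (fun k => x k) (le_trans hc2 hc1)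
    linarith
  set B := Real.sqrt (N * R^2) with hB
  have hBnn : 0 ≤ B := Real.sqrt_nonneg _
  have hnormE : ∀ x : EuclideanSpace ℝ (Fin N), h x ≤ M → ‖x‖ ≤ B := by
    intro x hx
    rw [EuclideanSpace.norm_eq, hB]
    apply Real.sqrt_le_sqrt
    calc ∑ j, ‖x j‖^2 ≤ ∑ _j : Fin N, R^2 := by
          refine Finset.sum_le_sum fun j _ => ?_
          exact pow_le_pow_left₀ (norm_nonneg _) (le_of_lt (hhb x hx j)) 2
      _ = N * R^2 := by simp [Finset.sum_const, nsmul_eq_mul]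
  -- bound region and extrema of h
  set ρ := 2*B + ‖xbE‖ + 1 with hρ
  have hρpos : 0 < ρ := by positivity
  set K := Metric.closedBall (0:EuclideanSpace ℝ (Fin N)) ρ with hK
  have hKcp : IsCompact K := by rw [hK]; exact isCompact_closedBall _ _
  have h0K : (0:EuclideanSpace ℝ (Fin N)) ∈ K := by
    rw [hK]; simp [le_of_lt hρpos]
  have hhcv' : ConvexOn ℝ (Set.univ : Set (EuclideanSpace ℝ (Fin N))) (fun y => h y) :=
    hhcv.comp_linearMap (WithLp.linearEquiv 2 ℝ (Fin N → ℝ)).toLinearMap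
  have hcont : Continuous (fun y : EuclideanSpace ℝ (Fin N) => h y) := by
    have := hhcv'.continuousOn isOpen_univ
    exact continuousOn_univ.mp this
  obtain ⟨zM, hzMK, hzMmax⟩ := hKcp.exists_isMaxOn ⟨0, h0K⟩ hcont.continuousOn
  obtain ⟨zm, hzmK, hzmmin⟩ := hKcp.exists_isMinOn ⟨0, h0K⟩ hcont.continuousOn
  set L := h zM - h zm with hL
  clear_value L
  have hL0 : 0 ≤ L := by
    have h1 : h zm ≤ h zM := hzMmax hzmK
    simp only [hL]
    linarith
  have hL1 : (0:ℝ) < L + 1 := by linarith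
  -- the epsilon bar
  refine ⟨α / (L + 1), div_pos hαpos hL1, ?_⟩
  intro ε hε hεle x hxP hxmin y hyP
  have hfstarle : ∀ z ∈ P, fstar ≤ f z := hxbmin
  suffices hfxle : f x ≤ fstar by exact le_trans hfxle (hfstarle y hyP)
  -- h x ≤ M
  have hMx : h x ≤ M := by
    have h1 := hxmin xb hxbP
    have h2 := hfstarle x hxP
    rw [← hfstar, ← hM] at h1
    nlinarith
  set xE : EuclideanSpace ℝ (Fin N) := WithLp.toLp 2 x with hxE
  have hxEB : ‖xE‖ ≤ B := hnormE xE hMx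
  -- projection onto SE
  obtain ⟨s, hsSE, hsinf⟩ := exists_norm_eq_iInf_of_complete_convex hSEne
    (hSEcl.isComplete) hSEconv xE
  have hvar : ∀ w ∈ SE, ⟪xE - s, w - s⟫ ≤ 0 :=
    (norm_eq_iInf_iff_real_inner_le_zero hSEconv hsSE).mp hsinf
  set dd := ‖xE - s‖ with hdd
  have hsP : (s : Fin N → ℝ) ∈ P := (hPmem s).mpr hsSE.1
  have hfs : f s = fstar := by
    refine le_antisymm ?_ (hfstarle s hsP)
    rw [hfx s]
    refine Finset.sup'_le _ _ fun i _ => ?_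
    exact hsSE.2 i
  by_cases hd0 : dd = 0
  · have hxs : xE = s := by rwa [hdd, norm_sub_eq_zero_iff] at hd0
    rw [show f x = f xE from rfl, hxs]
    exact le_of_eq hfs
  · exfalso
    have hdpos : 0 < dd := lt_of_le_of_ne (norm_nonneg _) (Ne.symm hd0)
    set u : EuclideanSpace ℝ (Fin N) := dd⁻¹ • (xE - s) with hu
    have hu1 : ‖u‖ = 1 := by
      rw [hu, norm_smul, norm_inv, Real.norm_eq_abs, abs_of_pos hdpos, ← hdd,
        inv_mul_cancel₀ hd0]
    have hdsu : xE - s = dd • u := by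
      rw [hu, smul_smul, mul_inv_cancel₀ hd0, one_smul]
    set I : Finset (Fin (r+1)) := Finset.univ.filter (fun i => ⟪q i, s⟫ + γ i = fstar) with hI
    set J : Finset (Fin ℓc) := Finset.univ.filter (fun j => ⟪c j, s⟫ = d j) with hJ
    clear_value I J
    have hJu : ∀ j ∈ J, ⟪c j, u⟫ ≤ 0 := by
      intro j hj
      have hjs : ⟪c j, s⟫ = d j := by
        rw [hJ] at hj; exact (Finset.mem_filter.mp hj).2
      have hxj : ⟪c j, xE⟫ ≤ d j := (hPmem xE).mp hxP j
      have : ⟪c j, xE - s⟫ ≤ 0 := by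
        rw [inner_sub_right]; linarith
      rw [hu, real_inner_smul_right]
      exact mul_nonpos_of_nonneg_of_nonpos (inv_nonneg.mpr (le_of_lt hdpos)) this
    have hpolar : ∀ v : EuclideanSpace ℝ (Fin N), (∀ j ∈ J, ⟪c j, v⟫ ≤ 0) → (∀ i ∈ I, ⟪q i, v⟫ ≤ 0) →
        ⟪u, v⟫ ≤ 0 := by
      intro v hv1 hv2
      set G : Fin ℓc ⊕ Fin (r+1) → ℝ :=
        Sum.elim
          (fun j => if ⟪c j, s⟫ = d j then 1 else (d j - ⟪c j, s⟫) / (1 + |⟪c j, v⟫|))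
          (fun i => if ⟪q i, s⟫ + γ i = fstar then 1
            else (fstar - γ i - ⟪q i, s⟫) / (1 + |⟪q i, v⟫|)) with hG
      have hGpos : ∀ z, 0 < G z := by
        intro z
        rcases z with j | i
        · simp only [hG, Sum.elim_inl]
          split_ifs with hcase
          · exact one_pos
          · have hle : ⟪c j, s⟫ ≤ d j := hsSE.1 j
            have : 0 < d j - ⟪c j, s⟫ := by
              rcases lt_or_eq_of_le hle with hlt | heq
              · linarith
              · exact absurd heq hcase
            positivity
        · simp only [hG, Sum.elim_inr]
          split_ifs with hcase
          · exact one_pos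
          · have hle : ⟪q i, s⟫ + γ i ≤ fstar := hsSE.2 i
            have : 0 < fstar - γ i - ⟪q i, s⟫ := by
              rcases lt_or_eq_of_le hle with hlt | heq
              · linarith
              · exact absurd heq hcase
            positivity
      set t := min 1 (Finset.univ.inf' (Finset.univ_nonempty_iff.mpr ⟨Sum.inr 0⟩) G) with ht
      have htpos : 0 < t := by
        rw [ht]
        refine lt_min one_pos ?_
        rw [Finset.lt_inf'_iff]
        exact fun z _ => hGpos z
      have htG : ∀ z, t ≤ G z := by
        intro z
        rw [ht]
        exact le_trans (min_le_right _ _) (Finset.inf'_le G (Finset.mem_univ z))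
      clear_value t
      have hwSE : s + t • v ∈ SE := by
        constructor
        · intro j
          have hexp : ⟪c j, s + t • v⟫ = ⟪c j, s⟫ + t * ⟪c j, v⟫ := by
            rw [inner_add_right, real_inner_smul_right]
          rw [hexp]
          by_cases hcase : ⟪c j, s⟫ = d j
          · have hjJ : j ∈ J := by rw [hJ]; exact Finset.mem_filter.mpr ⟨Finset.mem_univ _, hcase⟩
            have := hv1 j hjJ
            nlinarith [hsSE.1 j]
          · have hslack := htG (Sum.inl j)
            simp only [hG, Sum.elim_inl, if_neg hcase] at hslack
            have hden : (0:ℝ) < 1 + |⟪c j, v⟫| := by positivity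
            have hkey : t * (1 + |⟪c j, v⟫|) ≤ d j - ⟪c j, s⟫ := by
              rwa [← le_div_iff₀ hden]
            have h1 : t * ⟪c j, v⟫ ≤ t * |⟪c j, v⟫| :=
              mul_le_mul_of_nonneg_left (le_abs_self _) (le_of_lt htpos)
            nlinarith
        · intro i
          have hexp : ⟪q i, s + t • v⟫ = ⟪q i, s⟫ + t * ⟪q i, v⟫ := by
            rw [inner_add_right, real_inner_smul_right]
          rw [hexp]
          by_cases hcase : ⟪q i, s⟫ + γ i = fstar
          · have hiI : i ∈ I := by rw [hI]; exact Finset.mem_filter.mpr ⟨Finset.mem_univ _, hcase⟩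
            have := hv2 i hiI
            nlinarith [hsSE.2 i]
          · have hslack := htG (Sum.inr i)
            simp only [hG, Sum.elim_inr, if_neg hcase] at hslack
            have hden : (0:ℝ) < 1 + |⟪q i, v⟫| := by positivity
            have hkey : t * (1 + |⟪q i, v⟫|) ≤ fstar - γ i - ⟪q i, s⟫ := by
              rwa [← le_div_iff₀ hden]
            have h1 : t * ⟪q i, v⟫ ≤ t * |⟪q i, v⟫| :=
              mul_le_mul_of_nonneg_left (le_abs_self _) (le_of_lt htpos)
            nlinarith
      have := hvar _ hwSE
      have hsimp : ⟪xE - s, s + t • v - s⟫ = t * ⟪xE - s, v⟫ := by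
        rw [add_sub_cancel_left, real_inner_smul_right]
      rw [hsimp] at this
      have hxsv : ⟪xE - s, v⟫ ≤ 0 := nonpos_of_mul_nonpos_right ?_ htpos
      · rw [hu, real_inner_smul_left]
        exact mul_nonpos_of_nonneg_of_nonpos (inv_nonneg.mpr (le_of_lt hdpos)) hxsv
      · linarith
    -- apply the pattern bound
    obtain ⟨i, hiI, hia⟩ := hab ⟨I, J⟩ u hu1 hJu hpolar
    have hαu : α ≤ ⟪q i, u⟫ := le_trans (hαle ⟨I, J⟩) hia
    -- lower bound on f x
    have hfxlb : fstar + dd * α ≤ f x := by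
      have hpiece : ⟪q i, xE⟫ + γ i ≤ f x := by
        have := Finset.le_sup' (fun i => ⟪q i, xE⟫ + γ i) (Finset.mem_univ i)
        rw [← hfx xE] at this
        exact this
      have hiact : ⟪q i, s⟫ + γ i = fstar := by
        rw [hI] at hiI; exact (Finset.mem_filter.mp hiI).2
      have hsplit : ⟪q i, xE⟫ = ⟪q i, s⟫ + dd * ⟪q i, u⟫ := by
        have : ⟪q i, xE - s⟫ = dd * ⟪q i, u⟫ := by
          rw [hdsu, real_inner_smul_right]
        rw [inner_sub_right] at this
        linarith
      have : dd * α ≤ dd * ⟪q i, u⟫ := mul_le_mul_of_nonneg_left hαu (le_of_lt hdpos)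
      linarith
    -- upper bound via h
    have hsB : ‖s‖ ≤ 2*B + ‖xbE‖ := by
      have hdle : dd ≤ ‖xE - xbE‖ := by
        rw [hsinf]
        exact ciInf_le ⟨0, by rintro _ ⟨w, rfl⟩; exact norm_nonneg _⟩ (⟨xbE, hxbSE⟩ : SE)
      have h1 : ‖xE - xbE‖ ≤ ‖xE‖ + ‖xbE‖ := norm_sub_le _ _
      have h2 : ‖s‖ ≤ ‖xE‖ + dd := by
        calc ‖s‖ = ‖xE - (xE - s)‖ := by rw [sub_sub_cancel]
          _ ≤ ‖xE‖ + ‖xE - s‖ := norm_sub_le _ _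
          _ = ‖xE‖ + dd := by rw [hdd]
      linarith
    set w₀ : EuclideanSpace ℝ (Fin N) := s - u with hw₀
    have hw₀K : w₀ ∈ K := by
      rw [hK, Metric.mem_closedBall, dist_zero_right]
      have : ‖w₀‖ ≤ ‖s‖ + ‖u‖ := norm_sub_le _ _
      rw [hu1] at this
      rw [hρ]; linarith
    have hxEK : xE ∈ K := by
      rw [hK, Metric.mem_closedBall, dist_zero_right]
      rw [hρ]; linarith [norm_nonneg xbE]
    -- convexity: s = (1/(1+dd)) • xE + (dd/(1+dd)) • w₀
    have hd1 : (0:ℝ) < 1 + dd := by linarith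
    set θ1 := 1/(1+dd) with hθ1
    set θ2 := dd/(1+dd) with hθ2
    clear_value θ1 θ2
    have hθ1pos : 0 ≤ θ1 := by
      rw [hθ1]; exact le_of_lt (div_pos one_pos hd1)
    have hθ2pos : 0 ≤ θ2 := by
      rw [hθ2]; exact div_nonneg (le_of_lt hdpos) (le_of_lt hd1)
    have hθsum : θ1 + θ2 = 1 := by
      rw [hθ1, hθ2, ← add_div, div_self (ne_of_gt hd1)]
    have hcomb : θ1 • xE + θ2 • w₀ = s := by
      have hxEeq : xE = s + dd • u := by
        rw [← hdsu]; abel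
      rw [hxEeq, hw₀, smul_add, smul_sub, smul_smul]
      have h1 : θ1 * dd = θ2 := by rw [hθ1, hθ2]; ring
      rw [h1]
      have h2 : θ1 • s + θ2 • s = s := by
        rw [← add_smul, hθsum, one_smul]
      rw [add_assoc, add_comm (θ2 • u), sub_add_cancel, h2]
    have hjensen : h s ≤ θ1 * h xE + θ2 * h w₀ := by
      have := hhcv'.2 (Set.mem_univ xE) (Set.mem_univ w₀) hθ1pos hθ2pos hθsum
      rw [hcomb] at this
      exact this
    have hθ2dd : θ2 ≤ dd := by
      rw [hθ2, div_le_iff₀ hd1]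
      calc dd = dd * 1 := (mul_one dd).symm
        _ ≤ dd * (1 + dd) := by
            refine mul_le_mul_of_nonneg_left ?_ (le_of_lt hdpos)
            linarith
    have hhw₀ : h w₀ ≤ h zM := hzMmax hw₀K
    have hhxE : h zm ≤ h xE := hzmmin hxEK
    have hsx : h s - h x ≤ dd * L := by
      have hθ1' : θ1 = 1 - θ2 := eq_sub_of_add_eq hθsum
      have hxeq : h xE = h x := rfl
      have hstep : h s - h xE ≤ θ2 * (h w₀ - h xE) := by
        rw [hθ1'] at hjensen
        have hring : (1 - θ2) * h xE + θ2 * h w₀ = h xE + θ2 * (h w₀ - h xE) := by ring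
        rw [hring] at hjensen
        linarith
      have hΔ : h w₀ - h xE ≤ L := by rw [hL]; linarith
      have h1 : θ2 * (h w₀ - h xE) ≤ θ2 * L := mul_le_mul_of_nonneg_left hΔ hθ2pos
      have h2 : θ2 * L ≤ dd * L := mul_le_mul_of_nonneg_right hθ2dd hL0
      rw [← hxeq]
      linarith
    -- minimality at s
    have hmin := hxmin s hsP
    rw [hfs] at hmin
    have hxeq : h xE = h x := rfl
    have hfub : f x ≤ fstar + ε * (dd * L) := by
      have hεh : ε * (h s - h x) ≤ ε * (dd * L) :=
        mul_le_mul_of_nonneg_left hsx (le_of_lt hε)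
      have hfeq : f xE = f x := by rw [hxE]
      have hheq : h xE = h x := by rw [hxE]
      linarith
    -- contradiction
    have hεL : ε * (dd * L) < dd * α := by
      have h1 : ε * (dd * L) ≤ (α/(L+1)) * (dd * L) :=
        mul_le_mul_of_nonneg_right hεle (mul_nonneg (le_of_lt hdpos) hL0)
      have h2 : (α/(L+1)) * (dd * L) < dd * α := by
        rw [div_mul_eq_mul_div, div_lt_iff₀ hL1]
        have h3 : dd * α * (L + 1) = α * (dd * L) + α * dd := by ring
        rw [h3]
        linarith [mul_pos hαpos hdpos]
      linarith
    linarith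
end

section
/- Let C be a polyhedral set, A ∈ ℝ^{m×N}, E ∈ ℝ^{r×N}, b ∈ ℝ^m with the feasible set {x : Ax = b, x ∈ C} nonempty. Then there exists ᾱ > 0 such that for all α ∈ (0, ᾱ], every minimizer of min ‖Ex‖₁ + (α/2)‖x‖₂² subject to Ax = b, x ∈ C, is also a minimizer of min ‖Ex‖₁ subject to Ax = b, x ∈ C. -/
open Finset Matrix

/-- Conic Carathéodory: any nonnegative combination over `t` equals a nonnegative
combination over a linearly independent sub-Finset. -/
lemma carath {V ι : Type*} [AddCommGroup V] [Module ℝ V] [DecidableEq ι]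
    (a : ι → V) (t : Finset ι) :
    ∀ lam : ι → ℝ, (∀ i, 0 ≤ lam i) →
    ∃ s : Finset ι, s ⊆ t ∧ LinearIndependent ℝ (fun i : s => a (i : ι)) ∧
      ∃ mu : ι → ℝ, (∀ i, 0 ≤ mu i) ∧ ∑ i ∈ s, mu i • a i = ∑ i ∈ t, lam i • a i := by
  induction t using Finset.strongInduction with
  | _ t ih =>
    intro lam h0
    by_cases hli : LinearIndependent ℝ (fun i : t => a (i : ι))
    · exact ⟨t, Finset.Subset.refl t, hli, lam, h0, rfl⟩
    · obtain ⟨g, hg, i0, hi0⟩ := Fintype.not_linearIndependent_iff.1 hli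
      -- extend g to ι
      set gg : ι → ℝ := fun i => if h : i ∈ t then g ⟨i, h⟩ else 0 with hggdef
      have hggsum : ∑ i ∈ t, gg i • a i = 0 := by
        rw [← Finset.sum_attach t (fun i => gg i • a i)]
        rw [← hg]
        apply Finset.sum_congr rfl
        intro i _
        simp [hggdef, i.2]
      have hggi0 : gg (i0 : ι) ≠ 0 := by simpa [hggdef, i0.2] using hi0
      -- choose mu with a positive entry on t
      obtain ⟨mu0, hmusum, j0, hj0t, hj0⟩ :
          ∃ mu0 : ι → ℝ, (∑ i ∈ t, mu0 i • a i = 0) ∧ ∃ j0 : ι, j0 ∈ t ∧ 0 < mu0 j0 := by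
        rcases lt_or_gt_of_ne hggi0 with h | h
        · refine ⟨-gg, by simpa using hggsum, i0, i0.2, by simpa using h⟩
        · exact ⟨gg, hggsum, i0, i0.2, h⟩
      set T : Finset ι := t.filter (fun i => 0 < mu0 i) with hT
      have hTne : T.Nonempty := ⟨j0, by simp [hT, hj0t, hj0]⟩
      set rr : ℝ := T.inf' hTne (fun i => lam i / mu0 i) with hrr
      obtain ⟨i1, hi1T, hi1⟩ := Finset.exists_mem_eq_inf' hTne (fun i => lam i / mu0 i)
      have hi1t : i1 ∈ t := (Finset.mem_filter.1 hi1T).1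
      have hi1pos : 0 < mu0 i1 := (Finset.mem_filter.1 hi1T).2
      have hrr0 : 0 ≤ rr := by
        rw [hrr, hi1]
        exact div_nonneg (h0 i1) hi1pos.le
      set lam' : ι → ℝ := fun i => if i ∈ t then lam i - rr * mu0 i else 0 with hlam'
      have hlam'0 : ∀ i, 0 ≤ lam' i := by
        intro i
        rw [hlam']
        by_cases hit : i ∈ t
        · simp only [hit, if_true]
          by_cases hpos : 0 < mu0 i
          · have hiT : i ∈ T := Finset.mem_filter.2 ⟨hit, hpos⟩
            have : rr ≤ lam i / mu0 i := by
              rw [hrr]; exact Finset.inf'_le _ hiT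
            have := (le_div_iff₀ hpos).1 this
            linarith
          · push_neg at hpos
            nlinarith [h0 i, mul_nonpos_of_nonneg_of_nonpos hrr0 hpos]
        · simp [hit]
      have hlam'i1 : lam' i1 = 0 := by
        rw [hlam']
        simp only [hi1t, if_true]
        have : rr = lam i1 / mu0 i1 := by rw [hrr, hi1]
        rw [this]
        field_simp
        ring
      have hsum' : ∑ i ∈ t, lam' i • a i = ∑ i ∈ t, lam i • a i := by
        have : ∀ i ∈ t, lam' i • a i = lam i • a i - rr • (mu0 i • a i) := by
          intro i hit
          rw [hlam']
          simp only [hit, if_true, sub_smul, smul_smul]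
        rw [Finset.sum_congr rfl this, Finset.sum_sub_distrib, ← Finset.smul_sum, hmusum,
          smul_zero, sub_zero]
      have hsub : t.erase i1 ⊂ t := Finset.erase_ssubset hi1t
      obtain ⟨s, hs1, hs2, mu, hmu0, hmusum'⟩ := ih (t.erase i1) hsub lam' hlam'0
      refine ⟨s, hs1.trans (Finset.erase_subset _ _), hs2, mu, hmu0, ?_⟩
      rw [hmusum', Finset.sum_erase _ (by rw [hlam'i1, zero_smul]), hsum']

/-- Finitely generated cones are closed. -/
lemma fg_cone_closed {ξ ι : Type*} [Fintype ξ] [Fintype ι] [DecidableEq ι]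
    (a : ι → EuclideanSpace ℝ ξ) :
    IsClosed {z : EuclideanSpace ℝ ξ |
      ∃ lam : ι → ℝ, (∀ i, 0 ≤ lam i) ∧ z = ∑ i, lam i • a i} := by
  classical
  set LI : Finset ι → Prop := fun s => LinearIndependent ℝ (fun i : {x // x ∈ s} => a i.1)
    with hLI
  have hK : {z : EuclideanSpace ℝ ξ | ∃ lam : ι → ℝ, (∀ i, 0 ≤ lam i) ∧ z = ∑ i, lam i • a i}
      = ⋃ s : {s : Finset ι // LI s},
        (fun mu : {x // x ∈ s.1} → ℝ => ∑ i : {x // x ∈ s.1}, mu i • a (i : ι)) ''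
          {mu | ∀ i, 0 ≤ mu i} := by
    ext z
    simp only [Set.mem_setOf_eq, Set.mem_iUnion, Set.mem_image]
    constructor
    · rintro ⟨lam, h0, rfl⟩
      obtain ⟨s, _, hli, mu, hmu0, hsum⟩ := carath a Finset.univ lam h0
      refine ⟨⟨s, hli⟩, fun i => mu i.1, fun i => hmu0 i.1, ?_⟩
      rw [Finset.sum_coe_sort s (fun i => mu i • a i), hsum]
    · rintro ⟨s, mu, hmu0, rfl⟩
      refine ⟨fun i => if h : i ∈ s.1 then mu ⟨i, h⟩ else 0, ?_, ?_⟩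
      · intro i
        by_cases h : i ∈ s.1 <;> simp [h, hmu0]
      · rw [← Finset.sum_subset (Finset.subset_univ s.1)
          (f := fun i => (if h : i ∈ s.1 then mu ⟨i, h⟩ else 0) • a i)
          (by intro i _ hi; simp [hi])]
        rw [← Finset.sum_attach s.1 (fun i => (if h : i ∈ s.1 then mu ⟨i, h⟩ else 0) • a i)]
        rw [Finset.univ_eq_attach]
        apply Finset.sum_congr rfl
        intro i _
        simp [i.2]
  rw [hK]
  apply isClosed_iUnion_of_finite
  rintro ⟨s, hli⟩
  have hker : LinearMap.ker (Fintype.linearCombination ℝ (fun i : {x // x ∈ s} => a i.1)) = ⊥ := by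
    rw [LinearMap.ker_eq_bot']
    intro mu hmu
    rw [Fintype.linearCombination_apply] at hmu
    exact funext (Fintype.linearIndependent_iff.1 hli mu hmu)
  have hce := LinearMap.isClosedEmbedding_of_injective hker
  have hclosed : IsClosed {mu : {x // x ∈ s} → ℝ | ∀ i, 0 ≤ mu i} := by
    have : {mu : {x // x ∈ s} → ℝ | ∀ i, 0 ≤ mu i} = ⋂ i, {mu | 0 ≤ mu i} := by
      ext; simp
    rw [this]
    exact isClosed_iInter fun i => isClosed_le continuous_const (continuous_apply i)
  have h2 := hce.isClosedMap _ hclosed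
  convert h2 using 2
  rw [Fintype.linearCombination_apply]

open scoped InnerProductSpace in
/-- Farkas' lemma, dot-product form. -/
lemma farkas_dot {ξ ι : Type*} [Fintype ξ] [DecidableEq ξ] [Fintype ι] [DecidableEq ι]
    (a : ι → (ξ → ℝ)) (z : ξ → ℝ)
    (h : ∀ w : ξ → ℝ, (∀ i, a i ⬝ᵥ w ≤ 0) → z ⬝ᵥ w ≤ 0) :
    ∃ lam : ι → ℝ, (∀ i, 0 ≤ lam i) ∧ z = ∑ i, lam i • a i := by
  classical
  set e : (ξ → ℝ) ≃ₗ[ℝ] EuclideanSpace ℝ ξ := (WithLp.linearEquiv 2 ℝ (ξ → ℝ)).symm with he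
  have hinner : ∀ u v : ξ → ℝ, ⟪e u, e v⟫_ℝ = u ⬝ᵥ v := by
    intro u v
    simp [he, PiLp.inner_apply, RCLike.inner_apply, dotProduct, mul_comm]
  set K : ConvexCone ℝ (EuclideanSpace ℝ ξ) :=
    { carrier := {w | ∃ lam : ι → ℝ, (∀ i, 0 ≤ lam i) ∧ w = ∑ i, lam i • e (a i)}
      smul_mem' := by
        rintro c hc w ⟨lam, h0, rfl⟩
        exact ⟨fun i => c * lam i, fun i => mul_nonneg hc.le (h0 i), by
          rw [Finset.smul_sum]; apply Finset.sum_congr rfl; intro i _; rw [smul_smul]⟩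
      add_mem' := by
        rintro w ⟨lam, h0, rfl⟩ w' ⟨lam', h0', rfl⟩
        exact ⟨fun i => lam i + lam' i, fun i => add_nonneg (h0 i) (h0' i), by
          rw [← Finset.sum_add_distrib]; apply Finset.sum_congr rfl; intro i _
          rw [add_smul]⟩ } with hKdef
  have hne : (K : Set (EuclideanSpace ℝ ξ)).Nonempty :=
    ⟨0, ⟨fun _ => 0, fun _ => le_refl _, by simp⟩⟩
  have hcl : IsClosed (K : Set (EuclideanSpace ℝ ξ)) := fg_cone_closed (fun i => e (a i))
  by_cases hzK : e z ∈ K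
  · obtain ⟨lam, h0, hsum⟩ := hzK
    refine ⟨lam, h0, ?_⟩
    apply e.injective
    rw [hsum, map_sum]
    apply Finset.sum_congr rfl
    intro i _
    rw [_root_.map_smul]
  · obtain ⟨y, hy1, hy2⟩ :=
      ProperCone.hyperplane_separation' ⟨K.toPointedCone (.of_nonempty_of_isClosed hne hcl), hcl⟩ hzK
    exfalso
    have hw : ∀ i, a i ⬝ᵥ (-(e.symm y)) ≤ 0 := by
      intro i
      have hmem : e (a i) ∈ K := ⟨fun j => if j = i then 1 else 0, by
        intro j; dsimp only; split <;> norm_num, by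
        rw [Finset.sum_eq_single i (by intro j _ hj; simp [hj]) (by simp)]; simp⟩
      have := hy1 _ hmem
      have h2 : ⟪e (a i), e (e.symm y)⟫_ℝ = a i ⬝ᵥ (e.symm y) := hinner _ _
      rw [e.apply_symm_apply] at h2
      rw [dotProduct_neg]
      linarith [h2 ▸ this]
    have hz := h _ hw
    rw [dotProduct_neg] at hz
    have h3 : ⟪e (e.symm y), e z⟫_ℝ = (e.symm y) ⬝ᵥ z := hinner _ _
    rw [e.apply_symm_apply] at h3
    rw [dotProduct_comm] at hz
    linarith [h3 ▸ (by rw [real_inner_comm]; exact hy2 : ⟪y, e z⟫_ℝ < 0)]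

lemma dot_sum_elim {ξ : Type*} [Fintype ξ] (u : ξ → ℝ) (v : ℝ) (w : (ξ ⊕ Unit) → ℝ) :
    Sum.elim u (fun _ => v) ⬝ᵥ w = u ⬝ᵥ (w ∘ Sum.inl) + v * w (Sum.inr ()) := by
  simp [dotProduct, Fintype.sum_sum_type]

/-- Farkas alternative for infeasible systems. -/
lemma farkas_infeasible {ξ ι : Type*} [Fintype ξ] [DecidableEq ξ] [Fintype ι] [DecidableEq ι]
    (a : ι → ξ → ℝ) (bv : ι → ℝ)
    (h : ¬ ∃ x : ξ → ℝ, ∀ i, a i ⬝ᵥ x ≤ bv i) :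
    ∃ lam : ι → ℝ, (∀ i, 0 ≤ lam i) ∧ (∑ i, lam i • a i) = 0 ∧ (∑ i, lam i * bv i) < 0 := by
  classical
  set aL : (ι ⊕ Unit) → (ξ ⊕ Unit) → ℝ :=
    Sum.elim (fun i => Sum.elim (a i) (fun _ => -bv i))
      (fun _ => Sum.elim (fun _ => 0) (fun _ => -1)) with haL
  set z : (ξ ⊕ Unit) → ℝ := Sum.elim (fun _ => 0) (fun _ => 1) with hz
  have hyp : ∀ w, (∀ j, aL j ⬝ᵥ w ≤ 0) → z ⬝ᵥ w ≤ 0 := by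
    intro w hw
    set x := w ∘ Sum.inl with hx
    set t := w (Sum.inr ()) with ht'
    have hzw : z ⬝ᵥ w = t := by
      rw [hz, dot_sum_elim]
      simp [dotProduct]
      rfl
    have ht : 0 ≤ t := by
      have h2 := hw (Sum.inr ())
      rw [haL] at h2
      simp only [Sum.elim_inr] at h2
      rw [dot_sum_elim] at h2
      simp [dotProduct] at h2
      linarith
    rw [hzw]
    by_contra hpos
    push_neg at hpos
    apply h
    refine ⟨t⁻¹ • x, fun i => ?_⟩
    have h2 := hw (Sum.inl i)
    rw [haL] at h2
    simp only [Sum.elim_inl] at h2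
    rw [dot_sum_elim] at h2
    have h3 : a i ⬝ᵥ x ≤ bv i * t := by linarith
    have h4 : a i ⬝ᵥ (t⁻¹ • x) = t⁻¹ * (a i ⬝ᵥ x) := by
      rw [dotProduct_smul]; rfl
    rw [h4]
    calc t⁻¹ * (a i ⬝ᵥ x) ≤ t⁻¹ * (bv i * t) :=
          mul_le_mul_of_nonneg_left h3 (inv_nonneg.2 ht)
      _ = bv i := by field_simp
  obtain ⟨lamL, hlam0, hsum⟩ := farkas_dot aL z hyp
  rw [Fintype.sum_sum_type] at hsum
  simp only [Finset.univ_unique, Finset.sum_singleton] at hsum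
  set lam := fun i => lamL (Sum.inl i) with hlamdef
  set mu := lamL (Sum.inr ()) with hmudef
  have hEval : ∀ p, z p = (∑ i : ι, lam i * aL (Sum.inl i) p) + mu * aL (Sum.inr default) p := by
    intro p
    have h6 := congrFun hsum p
    simpa only [Pi.add_apply, Finset.sum_apply, Pi.smul_apply, smul_eq_mul] using h6
  refine ⟨lam, fun i => hlam0 _, ?_, ?_⟩
  · funext c
    have h6 := hEval (Sum.inl c)
    simp only [hz, haL, Sum.elim_inl, Sum.elim_inr, mul_zero, add_zero] at h6
    rw [Finset.sum_apply]
    simp only [Pi.smul_apply, smul_eq_mul, Pi.zero_apply]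
    exact h6.symm
  · have h6 := hEval (Sum.inr default)
    simp only [hz, haL, Sum.elim_inl, Sum.elim_inr, mul_neg, mul_one] at h6
    have hmu0 : 0 ≤ mu := hlam0 (Sum.inr ())
    have h7 : ∑ x, -(lam x * bv x) = -∑ x, lam x * bv x := Finset.sum_neg_distrib _
    rw [h7] at h6
    linarith

lemma sum_dot {ι ξ : Type*} [Fintype ι] [Fintype ξ] (v : ι → ξ → ℝ) (w : ξ → ℝ) :
    (∑ i, v i) ⬝ᵥ w = ∑ i, v i ⬝ᵥ w := by
  simp only [dotProduct, Finset.sum_apply, Finset.sum_mul]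
  rw [Finset.sum_comm]

/-- Attainment for linear programs bounded below. -/
lemma lp_attain {ξ ι : Type*} [Fintype ξ] [DecidableEq ξ] [Fintype ι] [DecidableEq ι]
    (a : ι → ξ → ℝ) (bv : ι → ℝ) (c : ξ → ℝ)
    (x0 : ξ → ℝ) (hx0 : ∀ i, a i ⬝ᵥ x0 ≤ bv i)
    (B : ℝ) (hB : ∀ x, (∀ i, a i ⬝ᵥ x ≤ bv i) → B ≤ c ⬝ᵥ x) :
    ∃ xs, (∀ i, a i ⬝ᵥ xs ≤ bv i) ∧ ∀ y, (∀ i, a i ⬝ᵥ y ≤ bv i) → c ⬝ᵥ xs ≤ c ⬝ᵥ y := by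
  classical
  set T : Set ℝ := {v | ∃ x, (∀ i, a i ⬝ᵥ x ≤ bv i) ∧ v = c ⬝ᵥ x} with hT
  have hTne : T.Nonempty := ⟨c ⬝ᵥ x0, x0, hx0, rfl⟩
  have hTbd : BddBelow T := ⟨B, by rintro v ⟨x, hx, rfl⟩; exact hB x hx⟩
  set v := sInf T with hv
  -- claim: exists feasible x with c ⬝ᵥ x ≤ v
  by_cases hex : ∃ x, (∀ i, a i ⬝ᵥ x ≤ bv i) ∧ c ⬝ᵥ x ≤ v
  · obtain ⟨xs, hxs, hle⟩ := hex
    refine ⟨xs, hxs, fun y hy => hle.trans (csInf_le hTbd ⟨y, hy, rfl⟩)⟩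
  · exfalso
    -- the system (a i, bv i) together with (c, v) is infeasible
    have hinf : ¬ ∃ x : ξ → ℝ, ∀ j : ι ⊕ Unit,
        Sum.elim a (fun _ => c) j ⬝ᵥ x ≤ Sum.elim bv (fun _ => v) j := by
      rintro ⟨x, hx⟩
      exact hex ⟨x, fun i => hx (Sum.inl i), hx (Sum.inr ())⟩
    obtain ⟨lamL, hlam0, hsum0, hsumb⟩ := farkas_infeasible _ _ hinf
    rw [Fintype.sum_sum_type] at hsum0 hsumb
    simp only [Finset.univ_unique, Finset.sum_singleton, Sum.elim_inl, Sum.elim_inr] at hsum0 hsumb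
    set lam := fun i => lamL (Sum.inl i) with hlamdef
    set θ := lamL (Sum.inr default) with hθdef
    have hθ0 : 0 ≤ θ := hlam0 _
    -- dot the vector equation with any feasible x
    have hdot : ∀ x : ξ → ℝ, (∑ i, lam i * (a i ⬝ᵥ x)) + θ * (c ⬝ᵥ x) = 0 := by
      intro x
      have h1 := congrArg (fun u => u ⬝ᵥ x) hsum0
      simp only [zero_dotProduct, add_dotProduct, sum_dot,
        smul_dotProduct, smul_eq_mul] at h1
      exact h1
    by_cases hθ : θ = 0
    · -- ∑ lam i • a i = 0 and ∑ lam i bv i < 0, contradict feasibility of x0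
      have h1 := hdot x0
      rw [hθ, zero_mul, add_zero] at h1
      have h2 : ∑ i, lam i * (a i ⬝ᵥ x0) ≤ ∑ i, lam i * bv i := by
        apply Finset.sum_le_sum
        intro i _
        exact mul_le_mul_of_nonneg_left (hx0 i) (hlam0 _)
      rw [hθ, zero_mul, add_zero] at hsumb
      linarith
    · have hθpos : 0 < θ := lt_of_le_of_ne hθ0 (Ne.symm hθ)
      -- every feasible x has c ⬝ᵥ x ≥ (-∑ lam bv)/θ > v
      have hlb : ∀ x, (∀ i, a i ⬝ᵥ x ≤ bv i) → (-∑ i, lam i * bv i) / θ ≤ c ⬝ᵥ x := by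
        intro x hx
        have h1 := hdot x
        have h2 : ∑ i, lam i * (a i ⬝ᵥ x) ≤ ∑ i, lam i * bv i := by
          apply Finset.sum_le_sum
          intro i _
          exact mul_le_mul_of_nonneg_left (hx i) (hlam0 _)
        rw [div_le_iff₀ hθpos]
        nlinarith
      have hvlb : (-∑ i, lam i * bv i) / θ ≤ v := by
        apply le_csInf hTne
        rintro w ⟨x, hx, rfl⟩
        exact hlb x hx
      have hgt : v < (-∑ i, lam i * bv i) / θ := by
        rw [lt_div_iff₀ hθpos]
        nlinarith
      linarith

/-- Exact ℓ₂-regularization of the generalized basis pursuit problem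
`min ‖Ex‖₁ s.t. Ax = b, x ∈ 𝒞`: for all sufficiently small `α > 0`, every
minimizer of `‖Ex‖₁ + (α/2)‖x‖₂²` over the feasible set is a minimizer of
`‖Ex‖₁` over the feasible set. -/
theorem stmt7 {m N r ℓc : ℕ}
    (A : Matrix (Fin m) (Fin N) ℝ) (E : Matrix (Fin r) (Fin N) ℝ)
    (b : Fin m → ℝ) (Cm : Matrix (Fin ℓc) (Fin N) ℝ) (d : Fin ℓc → ℝ)
    (𝒞 : Set (Fin N → ℝ)) (h𝒞 : 𝒞 = {x | ∀ i, Cm.mulVec x i ≤ d i})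
    (hfeas : ∃ x ∈ 𝒞, A.mulVec x = b) :
    ∃ αbar > (0 : ℝ), ∀ α : ℝ, 0 < α → α ≤ αbar →
      ∀ x, (x ∈ 𝒞 ∧ A.mulVec x = b ∧
        ∀ y, y ∈ 𝒞 → A.mulVec y = b →
          (∑ i, |E.mulVec x i|) + α / 2 * (∑ j, (x j) ^ 2) ≤
            (∑ i, |E.mulVec y i|) + α / 2 * (∑ j, (y j) ^ 2)) →
      ∀ y, y ∈ 𝒞 → A.mulVec y = b →
        (∑ i, |E.mulVec x i|) ≤ (∑ i, |E.mulVec y i|) := by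
  classical
  subst h𝒞
  set f : (Fin N → ℝ) → ℝ := fun x => ∑ i, |E.mulVec x i| with hf
  set g : (Fin N → ℝ) → ℝ := fun x => ∑ j, x j ^ 2 with hg
  set P : Set (Fin N → ℝ) := {x | (∀ i, Cm.mulVec x i ≤ d i) ∧ A.mulVec x = b} with hP
  obtain ⟨x0, hx0C, hx0A⟩ := hfeas
  have hx0P : x0 ∈ P := ⟨hx0C, hx0A⟩
  -- sign vectors and the linear pieces of f
  set σ : (Fin r → Bool) → (Fin r → ℝ) := fun s i => if s i then 1 else -1 with hσ
  set ws : (Fin r → Bool) → (Fin N → ℝ) := fun s => Matrix.vecMul (σ s) E with hws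
  have hwsdot : ∀ s x, ws s ⬝ᵥ x = σ s ⬝ᵥ E.mulVec x :=
    fun s x => (Matrix.dotProduct_mulVec (σ s) E x).symm
  have hf_nonneg : ∀ x, 0 ≤ f x := fun x => Finset.sum_nonneg fun i _ => abs_nonneg _
  have hF1 : ∀ s x, ws s ⬝ᵥ x ≤ f x := by
    intro s x
    rw [hwsdot]
    apply Finset.sum_le_sum
    intro i _
    rw [hσ]
    dsimp only
    by_cases h : s i = true
    · rw [if_pos h, one_mul]; exact le_abs_self _
    · rw [if_neg h, neg_one_mul]; exact neg_le_abs _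
  have hF2 : ∀ x, ∃ s, ws s ⬝ᵥ x = f x := by
    intro x
    refine ⟨fun i => decide (0 ≤ E.mulVec x i), ?_⟩
    rw [hwsdot]
    apply Finset.sum_congr rfl
    intro i _
    rw [hσ]
    dsimp only
    by_cases h : 0 ≤ E.mulVec x i
    · simp [h, abs_of_nonneg h]
    · push_neg at h
      simp [not_le.2 h, abs_of_neg h]
  -- row-of-matrix dot products
  have hrow : ∀ {n' : ℕ} (M : Matrix (Fin n') (Fin N) ℝ) (x : Fin N → ℝ) (k : Fin n'),
      M k ⬝ᵥ x = M.mulVec x k := fun _ _ _ => rfl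
  ------------------------------------------------------------------
  -- Step 1 : attainment of the minimum of f over P
  ------------------------------------------------------------------
  have hattain : ∃ xs ∈ P, ∀ y ∈ P, f xs ≤ f y := by
    set aL : (Fin ℓc ⊕ Fin m ⊕ Fin m ⊕ (Fin r → Bool)) → (Fin N ⊕ Unit → ℝ) := fun i =>
      match i with
      | .inl j => Sum.elim (Cm j) (fun _ => 0)
      | .inr (.inl k) => Sum.elim (A k) (fun _ => 0)
      | .inr (.inr (.inl k)) => Sum.elim (-(A k)) (fun _ => 0)
      | .inr (.inr (.inr s)) => Sum.elim (ws s) (fun _ => -1) with haL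
    set bL : (Fin ℓc ⊕ Fin m ⊕ Fin m ⊕ (Fin r → Bool)) → ℝ := fun i =>
      match i with
      | .inl j => d j
      | .inr (.inl k) => b k
      | .inr (.inr (.inl k)) => -(b k)
      | .inr (.inr (.inr s)) => 0 with hbL
    set cL : (Fin N ⊕ Unit) → ℝ := Sum.elim (fun _ => 0) (fun _ => 1) with hcL
    have hcLdot : ∀ w : Fin N ⊕ Unit → ℝ, cL ⬝ᵥ w = w (Sum.inr ()) := by
      intro w
      rw [hcL, dot_sum_elim]
      simp [dotProduct]
    have hfeasible : ∀ w : Fin N ⊕ Unit → ℝ, (∀ i, aL i ⬝ᵥ w ≤ bL i) ↔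
        ((w ∘ Sum.inl) ∈ P ∧ f (w ∘ Sum.inl) ≤ w (Sum.inr ())) := by
      intro w
      constructor
      · intro hw
        have hC : ∀ j, Cm.mulVec (w ∘ Sum.inl) j ≤ d j := by
          intro j
          have h1 : Sum.elim (Cm j) (fun _ => (0:ℝ)) ⬝ᵥ w ≤ d j := hw (.inl j)
          rw [dot_sum_elim] at h1
          rw [← hrow Cm]
          linarith
        have hA : A.mulVec (w ∘ Sum.inl) = b := by
          funext k
          have h1 : Sum.elim (A k) (fun _ => (0:ℝ)) ⬝ᵥ w ≤ b k := hw (.inr (.inl k))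
          have h2 : Sum.elim (-(A k)) (fun _ => (0:ℝ)) ⬝ᵥ w ≤ -(b k) :=
            hw (.inr (.inr (.inl k)))
          rw [dot_sum_elim] at h1 h2
          rw [neg_dotProduct] at h2
          have h3 : A k ⬝ᵥ (w ∘ Sum.inl) = b k := by linarith
          rw [← hrow A]
          exact h3
        have hfw : f (w ∘ Sum.inl) ≤ w (Sum.inr ()) := by
          obtain ⟨s, hs⟩ := hF2 (w ∘ Sum.inl)
          have h1 : Sum.elim (ws s) (fun _ => (-1:ℝ)) ⬝ᵥ w ≤ 0 := hw (.inr (.inr (.inr s)))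
          rw [dot_sum_elim] at h1
          linarith [hs.ge, hs.le]
        exact ⟨⟨hC, hA⟩, hfw⟩
      · rintro ⟨⟨hC, hA⟩, hfw⟩ (j | k | k | s)
        · show Sum.elim (Cm j) (fun _ => (0:ℝ)) ⬝ᵥ w ≤ d j
          rw [dot_sum_elim]
          have h1 := hC j
          rw [← hrow Cm] at h1
          linarith
        · show Sum.elim (A k) (fun _ => (0:ℝ)) ⬝ᵥ w ≤ b k
          rw [dot_sum_elim]
          have h1 : A k ⬝ᵥ (w ∘ Sum.inl) = b k := congrFun hA k
          linarith
        · show Sum.elim (-(A k)) (fun _ => (0:ℝ)) ⬝ᵥ w ≤ -(b k)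
          rw [dot_sum_elim, neg_dotProduct]
          have h1 : A k ⬝ᵥ (w ∘ Sum.inl) = b k := congrFun hA k
          linarith
        · show Sum.elim (ws s) (fun _ => (-1:ℝ)) ⬝ᵥ w ≤ 0
          rw [dot_sum_elim]
          have h1 := hF1 s (w ∘ Sum.inl)
          linarith
    have hx0L : ∀ i, aL i ⬝ᵥ (Sum.elim x0 (fun _ => f x0)) ≤ bL i := by
      apply (hfeasible _).2
      rw [Sum.elim_comp_inl]
      exact ⟨hx0P, le_refl _⟩
    have hlow : ∀ w, (∀ i, aL i ⬝ᵥ w ≤ bL i) → (0:ℝ) ≤ cL ⬝ᵥ w := by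
      intro w hw
      obtain ⟨hwP, hwf⟩ := (hfeasible w).1 hw
      rw [hcLdot]
      exact le_trans (hf_nonneg _) hwf
    obtain ⟨xt, hxtfeas, hxtmin⟩ := lp_attain aL bL cL _ hx0L 0 hlow
    obtain ⟨hxtP, hxtf⟩ := (hfeasible xt).1 hxtfeas
    refine ⟨xt ∘ Sum.inl, hxtP, ?_⟩
    intro y hyP
    have hyfeas : ∀ i, aL i ⬝ᵥ (Sum.elim y (fun _ => f y)) ≤ bL i := by
      apply (hfeasible _).2
      rw [Sum.elim_comp_inl]
      exact ⟨hyP, le_refl _⟩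
    have h1 := hxtmin _ hyfeas
    rw [hcLdot, hcLdot] at h1
    simp only [Sum.elim_inr] at h1
    exact le_trans hxtf h1
  obtain ⟨xs, hxsP, hxs_min⟩ := hattain
  set vstar := f xs with hvstar
  ------------------------------------------------------------------
  -- Step 2 : the minimum-norm optimal solution xb
  ------------------------------------------------------------------
  set S : Set (Fin N → ℝ) := {x | x ∈ P ∧ f x ≤ vstar} with hS
  have hcont_dot : ∀ u : Fin N → ℝ, Continuous fun x : Fin N → ℝ => u ⬝ᵥ x := by
    intro u
    have h1 : (fun x : Fin N → ℝ => u ⬝ᵥ x) = fun x => ∑ j, u j * x j := rfl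
    rw [h1]
    exact continuous_finset_sum _ fun j _ => continuous_const.mul (continuous_apply j)
  have hfc : Continuous f := by
    rw [hf]
    exact continuous_finset_sum _ fun i _ => ((hcont_dot (E i)).abs)
  have hgc : Continuous g := by
    rw [hg]
    exact continuous_finset_sum _ fun j _ => (continuous_apply j).pow 2
  have hPc : IsClosed P := by
    rw [hP]
    have h1 : {x : Fin N → ℝ | (∀ i, Cm.mulVec x i ≤ d i) ∧ A.mulVec x = b}
        = (⋂ i, {x : Fin N → ℝ | Cm i ⬝ᵥ x ≤ d i}) ∩
          (⋂ k, {x : Fin N → ℝ | A k ⬝ᵥ x = b k}) := by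
      ext x
      simp only [Set.mem_setOf_eq, Set.mem_inter_iff, Set.mem_iInter, funext_iff]
      rfl
    rw [h1]
    exact (isClosed_iInter fun i => isClosed_le (hcont_dot (Cm i)) continuous_const).inter
      (isClosed_iInter fun k => isClosed_eq (hcont_dot (A k)) continuous_const)
  have hSc : IsClosed S := hPc.inter (isClosed_le hfc continuous_const)
  have hminnorm : ∃ xb ∈ S, ∀ y ∈ S, g xb ≤ g y := by
    set R := Real.sqrt (g xs) with hR
    have hsub : S ∩ {x | g x ≤ g xs} ⊆ Metric.closedBall 0 R := by
      intro x hx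
      rw [Metric.mem_closedBall, dist_zero_right,
        pi_norm_le_iff_of_nonneg (Real.sqrt_nonneg _)]
      intro j
      rw [Real.norm_eq_abs, ← Real.sqrt_sq_eq_abs]
      apply Real.sqrt_le_sqrt
      calc x j ^ 2 ≤ g x := Finset.single_le_sum (f := fun j => x j ^ 2)
            (fun j _ => sq_nonneg _) (Finset.mem_univ j)
        _ ≤ g xs := hx.2
    have hxsS : xs ∈ S := ⟨hxsP, le_refl _⟩
    have hKc : IsCompact (S ∩ {x | g x ≤ g xs}) :=
      (isCompact_closedBall 0 R).of_isClosed_subset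
        (hSc.inter (isClosed_le hgc continuous_const)) hsub
    obtain ⟨xb, hxbK, hxbmin⟩ := hKc.exists_isMinOn ⟨xs, hxsS, (Set.mem_setOf_eq ▸ le_refl (g xs))⟩ hgc.continuousOn
    rw [isMinOn_iff] at hxbmin
    refine ⟨xb, hxbK.1, ?_⟩
    intro y hyS
    by_cases hgy : g y ≤ g xs
    · exact hxbmin y ⟨hyS, (Set.mem_setOf_eq ▸ hgy)⟩
    · push_neg at hgy
      have h1 := hxbmin xs ⟨hxsS, (Set.mem_setOf_eq ▸ le_refl (g xs))⟩
      linarith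
  obtain ⟨xb, hxbS, hgmin⟩ := hminnorm
  have hxbP : xb ∈ P := hxbS.1
  have hfxb : f xb = vstar := le_antisymm hxbS.2 (hxs_min xb hxbP)
  -- segment property and projection inequality
  have hseg : ∀ y ∈ S, ∀ t : ℝ, 0 ≤ t → t ≤ 1 → xb + t • (y - xb) ∈ S := by
    intro y hyS t ht0 ht1
    obtain ⟨⟨hyC', hyA'⟩, hyf⟩ := hyS
    have hptw : ∀ {n' : ℕ} (M : Matrix (Fin n') (Fin N) ℝ) (k : Fin n'),
        M.mulVec (xb + t • (y - xb)) k
          = M.mulVec xb k + t * (M.mulVec y k - M.mulVec xb k) := by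
      intro n' M k
      rw [Matrix.mulVec_add, Matrix.mulVec_smul, Matrix.mulVec_sub]
      simp only [Pi.add_apply, Pi.smul_apply, Pi.sub_apply, smul_eq_mul]
    refine ⟨⟨?_, ?_⟩, ?_⟩
    · intro i
      rw [hptw Cm i]
      have h1 := hxbP.1 i
      have h2 := hyC' i
      nlinarith
    · funext k
      rw [hptw A k]
      have h1 : A.mulVec xb k = b k := congrFun hxbP.2 k
      have h2 : A.mulVec y k = b k := congrFun hyA' k
      rw [h1, h2]
      simp
    · have hconv : f (xb + t • (y - xb)) ≤ (1-t) * f xb + t * f y := by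
        rw [hf]
        dsimp only
        calc ∑ i, |E.mulVec (xb + t • (y - xb)) i|
            ≤ ∑ i, ((1-t) * |E.mulVec xb i| + t * |E.mulVec y i|) := by
              apply Finset.sum_le_sum
              intro i _
              rw [hptw E i]
              have h3 : E.mulVec xb i + t * (E.mulVec y i - E.mulVec xb i)
                  = (1-t) * E.mulVec xb i + t * E.mulVec y i := by ring
              rw [h3]
              calc |(1-t) * E.mulVec xb i + t * E.mulVec y i|
                  ≤ |(1-t) * E.mulVec xb i| + |t * E.mulVec y i| := abs_add_le _ _
                _ = (1-t) * |E.mulVec xb i| + t * |E.mulVec y i| := by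
                    rw [abs_mul, abs_mul, abs_of_nonneg (by linarith : (0:ℝ) ≤ 1 - t),
                      abs_of_nonneg ht0]
          _ = (1-t) * f xb + t * f y := by
              rw [Finset.sum_add_distrib, ← Finset.mul_sum, ← Finset.mul_sum]
      have hfy : f y ≤ vstar := hyf
      have hfxb2 : f xb ≤ vstar := le_of_eq hfxb
      nlinarith
  have hgexp : ∀ (u w : Fin N → ℝ) (t : ℝ),
      g (u + t • w) = g u + 2*t*(u ⬝ᵥ w) + t^2 * (w ⬝ᵥ w) := by
    intro u w t
    rw [hg]
    dsimp only
    have h1 : ∀ j : Fin N, ((u + t • w) j)^2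
        = u j ^ 2 + (2*t) * (u j * w j) + t^2 * (w j * w j) := by
      intro j
      simp only [Pi.add_apply, Pi.smul_apply, smul_eq_mul]
      ring
    rw [Finset.sum_congr rfl (fun j _ => h1 j), Finset.sum_add_distrib,
      Finset.sum_add_distrib, ← Finset.mul_sum, ← Finset.mul_sum]
    rfl
  have hsq : ∀ w : Fin N → ℝ, 0 ≤ w ⬝ᵥ w := by
    intro w
    apply Finset.sum_nonneg
    intro j _
    exact mul_self_nonneg _
  have hproj : ∀ y ∈ S, 0 ≤ xb ⬝ᵥ (y - xb) := by
    intro y hyS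
    have hD0 : 0 ≤ (y - xb) ⬝ᵥ (y - xb) := hsq _
    have hkey2 : ∀ t : ℝ, 0 < t → t ≤ 1 →
        0 ≤ 2 * (xb ⬝ᵥ (y - xb)) + t * ((y - xb) ⬝ᵥ (y - xb)) := by
      intro t ht0 ht1
      have h1 := hgmin _ (hseg y hyS t ht0.le ht1)
      rw [hgexp xb (y - xb) t] at h1
      by_contra hcon
      push_neg at hcon
      nlinarith [mul_pos ht0 (neg_pos.2 hcon)]
    by_contra hneg
    push_neg at hneg
    set a := xb ⬝ᵥ (y - xb) with ha
    set D := (y - xb) ⬝ᵥ (y - xb) with hD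
    have ht0 : 0 < min 1 ((-a)/(D+1)) :=
      lt_min one_pos (div_pos (by linarith) (by linarith))
    have ht1 : min 1 ((-a)/(D+1)) ≤ 1 := min_le_left _ _
    have h3 : min 1 ((-a)/(D+1)) ≤ (-a)/(D+1) := min_le_right _ _
    have h4 : min 1 ((-a)/(D+1)) * (D+1) ≤ -a := (le_div_iff₀ (by linarith)).1 h3
    have h5 := hkey2 _ ht0 ht1
    nlinarith
  ------------------------------------------------------------------
  -- Step 3 : Farkas multipliers at xb
  ------------------------------------------------------------------
  set av : (Fin ℓc ⊕ Fin m ⊕ Fin m ⊕ (Fin r → Bool)) → (Fin N → ℝ) := fun i =>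
    match i with
    | .inl j => if Cm.mulVec xb j = d j then Cm j else 0
    | .inr (.inl k) => A k
    | .inr (.inr (.inl k)) => -(A k)
    | .inr (.inr (.inr s)) => if ws s ⬝ᵥ xb = vstar then ws s else 0
    with hav
  have hfark : ∃ lam : (Fin ℓc ⊕ Fin m ⊕ Fin m ⊕ (Fin r → Bool)) → ℝ,
      (∀ i, 0 ≤ lam i) ∧ (-xb) = ∑ i, lam i • av i := by
    apply farkas_dot
    intro w hw
    have hAw : A.mulVec w = 0 := by
      funext k
      have h1 : A k ⬝ᵥ w ≤ 0 := hw (.inr (.inl k))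
      have h2 : (-(A k)) ⬝ᵥ w ≤ 0 := hw (.inr (.inr (.inl k)))
      rw [neg_dotProduct] at h2
      have h3 : A k ⬝ᵥ w = 0 := le_antisymm h1 (by linarith)
      rw [hrow A] at h3
      rw [h3]
      rfl
    set slack : (Fin ℓc ⊕ (Fin r → Bool)) → ℝ :=
      Sum.elim (fun j => d j - Cm.mulVec xb j) (fun s => vstar - ws s ⬝ᵥ xb) with hslack
    set rate : (Fin ℓc ⊕ (Fin r → Bool)) → ℝ :=
      Sum.elim (fun j => Cm j ⬝ᵥ w) (fun s => ws s ⬝ᵥ w) with hrate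
    have hslack0 : ∀ k, 0 ≤ slack k := by
      rintro (j | s)
      · simp only [hslack, Sum.elim_inl]
        linarith [hxbP.1 j]
      · simp only [hslack, Sum.elim_inr]
        linarith [hF1 s xb, hfxb.le]
    have hactive : ∀ k, slack k = 0 → rate k ≤ 0 := by
      rintro (j | s) hk
      · simp only [hslack, Sum.elim_inl] at hk
        have hact : Cm.mulVec xb j = d j := by linarith
        have h1 : (if Cm.mulVec xb j = d j then Cm j else 0) ⬝ᵥ w ≤ 0 := hw (.inl j)
        rw [if_pos hact] at h1
        simpa [hrate] using h1
      · simp only [hslack, Sum.elim_inr] at hk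
        have hact : ws s ⬝ᵥ xb = vstar := by linarith
        have h1 : (if ws s ⬝ᵥ xb = vstar then ws s else 0) ⬝ᵥ w ≤ 0 :=
          hw (.inr (.inr (.inr s)))
        rw [if_pos hact] at h1
        simpa [hrate] using h1
    set β : (Fin ℓc ⊕ (Fin r → Bool)) → ℝ :=
      fun k => if 0 < rate k then slack k / rate k else 1 with hβ
    have hβpos : ∀ k, 0 < β k := by
      intro k
      rw [hβ]
      dsimp only
      split
      · rename_i hr
        have hsl : slack k ≠ 0 := fun h0 => absurd (hactive k h0) (not_le.2 hr)
        exact div_pos (lt_of_le_of_ne (hslack0 k) (Ne.symm hsl)) hr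
      · exact one_pos
    haveI : Nonempty (Fin ℓc ⊕ (Fin r → Bool)) := ⟨Sum.inr (fun _ => true)⟩
    set ε := min 1 (Finset.univ.inf' Finset.univ_nonempty β) with hε
    have hε0 : 0 < ε := by
      rw [hε]
      apply lt_min one_pos
      rw [Finset.lt_inf'_iff]
      intro k _
      exact hβpos k
    have hεrate : ∀ k, ε * rate k ≤ slack k := by
      intro k
      by_cases hr : 0 < rate k
      · have h1 : ε ≤ β k :=
          le_trans (min_le_right _ _) (Finset.inf'_le _ (Finset.mem_univ k))
        rw [hβ] at h1
        dsimp only at h1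
        rw [if_pos hr] at h1
        calc ε * rate k ≤ (slack k / rate k) * rate k :=
              mul_le_mul_of_nonneg_right h1 hr.le
          _ = slack k := by field_simp
      · push_neg at hr
        calc ε * rate k ≤ 0 := mul_nonpos_of_nonneg_of_nonpos hε0.le hr
          _ ≤ slack k := hslack0 k
    have hyS : xb + ε • w ∈ S := by
      refine ⟨⟨?_, ?_⟩, ?_⟩
      · intro j
        rw [Matrix.mulVec_add, Matrix.mulVec_smul]
        have h1 := hεrate (Sum.inl j)
        simp only [hslack, hrate, Sum.elim_inl] at h1
        have h2 : (Cm *ᵥ w) j = Cm j ⬝ᵥ w := rfl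
        simp only [Pi.add_apply, Pi.smul_apply, smul_eq_mul, h2]
        linarith
      · rw [Matrix.mulVec_add, Matrix.mulVec_smul, hAw, smul_zero, add_zero, hxbP.2]
      · obtain ⟨s, hs⟩ := hF2 (xb + ε • w)
        show f (xb + ε • w) ≤ vstar
        rw [← hs, dotProduct_add, dotProduct_smul, smul_eq_mul]
        have h1 := hεrate (Sum.inr s)
        simp only [hslack, hrate, Sum.elim_inr] at h1
        linarith
    have h2 := hproj _ hyS
    rw [add_sub_cancel_left, dotProduct_smul, smul_eq_mul] at h2
    rw [neg_dotProduct]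
    by_contra hcon
    push_neg at hcon
    nlinarith [mul_pos hε0 hcon]
  obtain ⟨lam, hlam0, hlamsum⟩ := hfark
  set Λ : ℝ := ∑ s : Fin r → Bool, lam (.inr (.inr (.inr s))) with hΛ
  have hΛ0 : 0 ≤ Λ := Finset.sum_nonneg fun s _ => hlam0 _
  refine ⟨1/(1+Λ), by positivity, ?_⟩
  ------------------------------------------------------------------
  -- Step 4 : xb minimizes the regularized problem, with a quadratic gap
  ------------------------------------------------------------------
  have hkey : ∀ α : ℝ, 0 < α → α ≤ 1/(1+Λ) → ∀ y ∈ P,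
      f xb + α/2 * g xb + α/2 * ((y - xb) ⬝ᵥ (y - xb)) ≤ f y + α/2 * g y := by
    intro α hα hαb y hyP
    have hΔ : 0 ≤ f y - f xb := by
      have h0 := hxs_min y hyP
      linarith [hfxb.le, hfxb.ge]
    have hdotu : xb ⬝ᵥ (y - xb) = -∑ i, lam i * (av i ⬝ᵥ (y - xb)) := by
      have h1 := congrArg (fun v => v ⬝ᵥ (y - xb)) hlamsum
      rw [neg_dotProduct, sum_dot] at h1
      have h2 : ∀ i ∈ Finset.univ, (lam i • av i) ⬝ᵥ (y - xb)
          = lam i * (av i ⬝ᵥ (y - xb)) := by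
        intro i _
        rw [smul_dotProduct, smul_eq_mul]
      rw [Finset.sum_congr rfl h2] at h1
      linarith
    have hblock : ∑ i, lam i * (av i ⬝ᵥ (y - xb)) ≤ Λ * (f y - f xb) := by
      rw [Fintype.sum_sum_type, Fintype.sum_sum_type, Fintype.sum_sum_type]
      have hC : ∑ j, lam (.inl j) * (av (.inl j) ⬝ᵥ (y - xb)) ≤ 0 := by
        apply Finset.sum_nonpos
        intro j _
        by_cases hact : Cm.mulVec xb j = d j
        · have h1 : av (.inl j) = Cm j := by
            rw [hav]
            exact if_pos hact
          rw [h1]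
          have h2 : Cm j ⬝ᵥ (y - xb) = Cm.mulVec y j - Cm.mulVec xb j := by
            rw [dotProduct_sub, hrow Cm, hrow Cm]
          rw [h2, hact]
          exact mul_nonpos_of_nonneg_of_nonpos (hlam0 _) (by linarith [hyP.1 j])
        · have h1 : av (.inl j) = 0 := by
            rw [hav]
            exact if_neg hact
          rw [h1, zero_dotProduct, mul_zero]
      have hA1 : ∑ k, lam (.inr (.inl k)) * (av (.inr (.inl k)) ⬝ᵥ (y - xb)) = 0 := by
        apply Finset.sum_eq_zero
        intro k _
        have h1 : av (.inr (.inl k)) = A k := rfl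
        have h2 : A k ⬝ᵥ (y - xb) = 0 := by
          rw [dotProduct_sub, hrow A, hrow A, hyP.2, hxbP.2, sub_self]
        rw [h1, h2, mul_zero]
      have hA2 : ∑ k, lam (.inr (.inr (.inl k))) * (av (.inr (.inr (.inl k))) ⬝ᵥ (y - xb)) = 0 := by
        apply Finset.sum_eq_zero
        intro k _
        have h1 : av (.inr (.inr (.inl k))) = -(A k) := rfl
        have h2 : A k ⬝ᵥ (y - xb) = 0 := by
          rw [dotProduct_sub, hrow A, hrow A, hyP.2, hxbP.2, sub_self]
        rw [h1, neg_dotProduct, h2, neg_zero, mul_zero]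
      have hsgn : ∑ s : Fin r → Bool,
          lam (.inr (.inr (.inr s))) * (av (.inr (.inr (.inr s))) ⬝ᵥ (y - xb))
          ≤ Λ * (f y - f xb) := by
        rw [hΛ, Finset.sum_mul]
        apply Finset.sum_le_sum
        intro s _
        by_cases hact : ws s ⬝ᵥ xb = vstar
        · have h1 : av (.inr (.inr (.inr s))) = ws s := by
            rw [hav]
            exact if_pos hact
          rw [h1]
          apply mul_le_mul_of_nonneg_left _ (hlam0 _)
          rw [dotProduct_sub, hact]
          linarith [hF1 s y, hfxb.le, hfxb.ge]
        · have h1 : av (.inr (.inr (.inr s))) = 0 := by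
            rw [hav]
            exact if_neg hact
          rw [h1, zero_dotProduct, mul_zero]
          exact mul_nonneg (hlam0 _) hΔ
      linarith
    have hgy : g y = g xb + 2*(xb ⬝ᵥ (y - xb)) + (y - xb) ⬝ᵥ (y - xb) := by
      have h0 : y = xb + (1:ℝ) • (y - xb) := by
        funext j
        simp
      calc g y = g (xb + (1:ℝ) • (y - xb)) := by rw [← h0]
        _ = g xb + 2*1*(xb ⬝ᵥ (y - xb)) + 1^2 * ((y - xb) ⬝ᵥ (y - xb)) := hgexp _ _ _
        _ = g xb + 2*(xb ⬝ᵥ (y - xb)) + (y - xb) ⬝ᵥ (y - xb) := by ring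
    have hαΛ : α * Λ ≤ 1 := by
      have h1 : α * (1+Λ) ≤ 1 := by
        rw [← le_div_iff₀ (by linarith : (0:ℝ) < 1+Λ)]
        exact hαb
      nlinarith
    have h9 : α * (∑ i, lam i * (av i ⬝ᵥ (y - xb))) ≤ α * Λ * (f y - f xb) := by
      calc α * (∑ i, lam i * (av i ⬝ᵥ (y - xb))) ≤ α * (Λ * (f y - f xb)) :=
            mul_le_mul_of_nonneg_left hblock hα.le
        _ = α * Λ * (f y - f xb) := by ring
    have h10 : α * Λ * (f y - f xb) ≤ f y - f xb := by
      calc α * Λ * (f y - f xb) ≤ 1 * (f y - f xb) :=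
            mul_le_mul_of_nonneg_right hαΛ hΔ
        _ = f y - f xb := one_mul _
    rw [hgy, hdotu]
    nlinarith [h9, h10]
  ------------------------------------------------------------------
  -- Step 5 : conclusion
  ------------------------------------------------------------------
  intro α hα hαb x hx y hyC hyA
  obtain ⟨hxC, hxA, hxmin⟩ := hx
  have hxP : x ∈ P := ⟨hxC, hxA⟩
  have hyP : y ∈ P := ⟨hyC, hyA⟩
  have h1 : f x + α/2 * g x ≤ f xb + α/2 * g xb := hxmin xb hxbP.1 hxbP.2
  have h2 := hkey α hα hαb x hxP
  have hU : (x - xb) ⬝ᵥ (x - xb) = 0 := by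
    have h3 : α/2 * ((x - xb) ⬝ᵥ (x - xb)) ≤ 0 := by linarith
    have h4 := hsq (x - xb)
    nlinarith
  have hxxb : x = xb := by
    funext j
    have h5 := (Finset.sum_eq_zero_iff_of_nonneg
      (fun j _ => mul_self_nonneg ((x - xb) j))).1 hU j (Finset.mem_univ j)
    have h6 : (x - xb) j = 0 := by
      exact mul_self_eq_zero.1 h5
    have : x j - xb j = 0 := h6
    linarith
  rw [hxxb] at *
  calc f xb = vstar := hfxb
    _ ≤ f y := hxs_min y hyP
end

section
/- Consider (P_μ): min (1/2)‖x‖₂² + μ‖x‖₁ subject to ‖Ax − b‖₂ ≤ σ, with σ > 0, ‖b‖₂ > σ, μ ≥ 0. A feasible point x* is a minimizer of (P_μ) if and only if ‖Ax* − b‖₂ = σ and for every u ∈ ℝ^N with either Au = 0 or gᵀu < 0 (where g := Aᵀ(Ax* − b)), one has x*ᵀu + μ · max_{i ∈ I(x*)} p_iᵀu ≥ 0, where I(x*) := {i : p_iᵀx* = ‖x*‖₁} and the p_i range over the 2^N sign vectors in {−1,+1}^N realizing ‖x‖₁ = max_i p_iᵀx. -/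
open Finset

lemma aux_sign_exists {N : ℕ} (p : (Fin N → Bool) → Fin N → ℝ)
    (hp : ∀ ε i, p ε i = if ε i then 1 else -1) (y : Fin N → ℝ) :
    ∃ ε, ∑ i, p ε i * y i = ∑ i, |y i| := by
  classical
  refine ⟨fun i => decide (0 ≤ y i), Finset.sum_congr rfl fun i _ => ?_⟩
  rw [hp]
  by_cases h : 0 ≤ y i
  · simp [h, abs_of_nonneg h]
  · push_neg at h
    simp [not_le.mpr h, abs_of_neg h]

lemma aux_sign_le {N : ℕ} (p : (Fin N → Bool) → Fin N → ℝ)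
    (hp : ∀ ε i, p ε i = if ε i then 1 else -1) (y : Fin N → ℝ) (ε : Fin N → Bool) :
    ∑ i, p ε i * y i ≤ ∑ i, |y i| := by
  refine Finset.sum_le_sum fun i _ => ?_
  rw [hp]
  split
  · simpa using le_abs_self (y i)
  · simpa using neg_le_abs (y i)

lemma aux_sign_ge {N : ℕ} (p : (Fin N → Bool) → Fin N → ℝ)
    (hp : ∀ ε i, p ε i = if ε i then 1 else -1) (y : Fin N → ℝ) (ε : Fin N → Bool) :
    -∑ i, |y i| ≤ ∑ i, p ε i * y i := by
  rw [← Finset.sum_neg_distrib]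
  refine Finset.sum_le_sum fun i _ => ?_
  rw [hp]
  split
  · simpa using neg_abs_le (y i)
  · simpa using le_abs_self (y i)

lemma aux_mulVec_lin {m N : ℕ} (A : Matrix (Fin m) (Fin N) ℝ) (x u : Fin N → ℝ) (t : ℝ)
    (i : Fin m) :
    A.mulVec (fun j => x j + t * u j) i = A.mulVec x i + t * A.mulVec u i := by
  simp only [Matrix.mulVec, dotProduct, Finset.mul_sum, ← Finset.sum_add_distrib]
  exact Finset.sum_congr rfl fun j _ => by ring

lemma aux_sum_sq_expand {m : ℕ} (r s : Fin m → ℝ) (t : ℝ) :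
    ∑ i, (r i + t * s i) ^ 2 =
      ∑ i, (r i) ^ 2 + 2 * t * ∑ i, r i * s i + t ^ 2 * ∑ i, (s i) ^ 2 := by
  rw [Finset.mul_sum, Finset.mul_sum, ← Finset.sum_add_distrib, ← Finset.sum_add_distrib]
  exact Finset.sum_congr rfl fun i _ => by ring

lemma aux_adj {m N : ℕ} (A : Matrix (Fin m) (Fin N) ℝ) (w : Fin m → ℝ) (u : Fin N → ℝ) :
    ∑ j, A.transpose.mulVec w j * u j = ∑ i, w i * A.mulVec u i := by
  simp only [Matrix.mulVec, dotProduct, Matrix.transpose_apply, Finset.sum_mul,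
    Finset.mul_sum]
  rw [Finset.sum_comm]
  exact Finset.sum_congr rfl fun i _ => Finset.sum_congr rfl fun j _ => by ring

set_option maxHeartbeats 2000000

/-- Optimality characterization for (P_μ): min `(1/2)‖x‖₂² + μ‖x‖₁` subject to
`‖Ax − b‖₂ ≤ σ`. A feasible `xstar` is a minimizer iff `‖A xstar − b‖₂ = σ` and
for every `u` with `Au = 0` or `gᵀu < 0` (where `g = Aᵀ(A xstar − b)`), one has
`xstarᵀu + μ · max_{active sign vectors p} pᵀu ≥ 0`. Sign vectors in `{±1}^N`
are indexed by `ε : Fin N → Bool`. -/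
theorem stmt9 {m N : ℕ} (A : Matrix (Fin m) (Fin N) ℝ) (b : Fin m → ℝ)
    (σ μ : ℝ) (hσ : 0 < σ) (hμ : 0 ≤ μ)
    (hb : σ < Real.sqrt (∑ i, (b i) ^ 2))
    (p : (Fin N → Bool) → Fin N → ℝ)
    (hp : ∀ ε i, p ε i = if ε i then 1 else -1)
    (xstar : Fin N → ℝ)
    (hfeas : Real.sqrt (∑ i, (A.mulVec xstar i - b i) ^ 2) ≤ σ)
    (g : Fin N → ℝ) (hg : g = A.transpose.mulVec (A.mulVec xstar - b)) :
    (∀ x, Real.sqrt (∑ i, (A.mulVec x i - b i) ^ 2) ≤ σ →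
        (1 / 2) * (∑ i, (xstar i) ^ 2) + μ * ∑ i, |xstar i| ≤
          (1 / 2) * (∑ i, (x i) ^ 2) + μ * ∑ i, |x i|) ↔
    (Real.sqrt (∑ i, (A.mulVec xstar i - b i) ^ 2) = σ ∧
      ∀ u : Fin N → ℝ, (A.mulVec u = 0 ∨ (∑ i, g i * u i) < 0) →
        0 ≤ (∑ i, xstar i * u i) +
          μ * sSup {v : ℝ | ∃ ε, (∑ i, p ε i * xstar i) = (∑ i, |xstar i|) ∧
            v = ∑ i, p ε i * u i}) := by
  classical
  -- basic notation
  have hb2 : σ ^ 2 < ∑ i, (b i) ^ 2 := by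
    have h0 : (0:ℝ) ≤ ∑ i, (b i) ^ 2 := Finset.sum_nonneg fun i _ => sq_nonneg _
    nlinarith [Real.sq_sqrt h0, Real.sqrt_nonneg (∑ i, (b i) ^ 2)]
  have hRnn : (0:ℝ) ≤ ∑ i, (A.mulVec xstar i - b i) ^ 2 :=
    Finset.sum_nonneg fun i _ => sq_nonneg _
  have hR : ∑ i, (A.mulVec xstar i - b i) ^ 2 ≤ σ ^ 2 := by
    nlinarith [Real.sq_sqrt hRnn, Real.sqrt_nonneg (∑ i, (A.mulVec xstar i - b i) ^ 2)]
  have feas_iff : ∀ x : Fin N → ℝ,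
      Real.sqrt (∑ i, (A.mulVec x i - b i) ^ 2) ≤ σ ↔
        ∑ i, (A.mulVec x i - b i) ^ 2 ≤ σ ^ 2 := by
    intro x
    have h0 : (0:ℝ) ≤ ∑ i, (A.mulVec x i - b i) ^ 2 :=
      Finset.sum_nonneg fun i _ => sq_nonneg _
    constructor
    · intro h
      nlinarith [Real.sq_sqrt h0, Real.sqrt_nonneg (∑ i, (A.mulVec x i - b i) ^ 2)]
    · intro h
      calc Real.sqrt (∑ i, (A.mulVec x i - b i) ^ 2) ≤ Real.sqrt (σ ^ 2) :=
            Real.sqrt_le_sqrt h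
        _ = σ := Real.sqrt_sq hσ.le
  -- the inner product ∑ g i * u i equals ⟨A xstar - b, A u⟩
  have hgu : ∀ u : Fin N → ℝ,
      ∑ i, g i * u i = ∑ i, (A.mulVec xstar i - b i) * A.mulVec u i := by
    intro u
    rw [hg, aux_adj]
    exact Finset.sum_congr rfl fun i _ => by simp [Pi.sub_apply]
  constructor
  · intro hmin
    have hS : 0 < ∑ i, (xstar i) ^ 2 := by
      rcases eq_or_lt_of_le (Finset.sum_nonneg fun i (_ : i ∈ Finset.univ) =>
          sq_nonneg (xstar i)) with h0 | h
      · exfalso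
        have hz : ∀ i, xstar i = 0 := by
          intro i
          have := (Finset.sum_eq_zero_iff_of_nonneg
            (fun i (_ : i ∈ Finset.univ) => sq_nonneg (xstar i))).1 h0.symm i (Finset.mem_univ i)
          simpa using pow_eq_zero_iff (two_ne_zero) |>.1 this
        have hA0 : ∀ i, A.mulVec xstar i = 0 := by
          intro i
          have : xstar = fun _ => (0:ℝ) := funext hz
          simp [this, Matrix.mulVec, dotProduct]
        have hRb : ∑ i, (A.mulVec xstar i - b i) ^ 2 = ∑ i, (b i) ^ 2 :=
          Finset.sum_congr rfl fun i _ => by rw [hA0 i]; ring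
        rw [hRb] at hR
        linarith
      · exact h
    have hReq : ∑ i, (A.mulVec xstar i - b i) ^ 2 = σ ^ 2 := by
      by_contra hne
      have hRlt : ∑ i, (A.mulVec xstar i - b i) ^ 2 < σ ^ 2 := lt_of_le_of_ne hR hne
      set R := ∑ i, (A.mulVec xstar i - b i) ^ 2 with hRd
      set W := ∑ i, (A.mulVec xstar i - b i) * (-(A.mulVec xstar i)) with hWd
      set Q := ∑ i, (-(A.mulVec xstar i)) ^ 2 with hQd
      have hQnn : (0:ℝ) ≤ Q := Finset.sum_nonneg fun i _ => sq_nonneg _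
      set t : ℝ := min 1 ((σ ^ 2 - R) / (2 * |W| + Q + 1)) with htd
      have hden : (0:ℝ) < 2 * |W| + Q + 1 := by positivity
      have ht0 : 0 < t := lt_min one_pos (div_pos (by linarith) hden)
      have ht1 : t ≤ 1 := min_le_left _ _
      have htle : t * (2 * |W| + Q + 1) ≤ σ ^ 2 - R := by
        have := min_le_right 1 ((σ ^ 2 - R) / (2 * |W| + Q + 1))
        calc t * (2 * |W| + Q + 1) ≤ (σ ^ 2 - R) / (2 * |W| + Q + 1) * (2 * |W| + Q + 1) :=
              mul_le_mul_of_nonneg_right (by rw [← htd] at this; exact this) hden.le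
          _ = σ ^ 2 - R := div_mul_cancel₀ _ (ne_of_gt hden)
      -- the perturbed point
      set xt : Fin N → ℝ := fun j => xstar j + t * (-(xstar j)) with hxtd
      have hAxt : ∀ i, A.mulVec xt i = A.mulVec xstar i + t * (-(A.mulVec xstar i)) := by
        intro i
        have h1 : A.mulVec xt i = A.mulVec xstar i + t * A.mulVec (fun j => -(xstar j)) i :=
          aux_mulVec_lin A xstar (fun j => -(xstar j)) t i
        have h2 : A.mulVec (fun j => -(xstar j)) i = -(A.mulVec xstar i) := by
          simp [Matrix.mulVec, dotProduct, mul_neg, Finset.sum_neg_distrib]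
        rw [h1, h2]
      have hres : ∑ i, (A.mulVec xt i - b i) ^ 2 = R + 2 * t * W + t ^ 2 * Q := by
        rw [hRd, hWd, hQd,
          ← aux_sum_sq_expand (fun i => A.mulVec xstar i - b i) (fun i => -(A.mulVec xstar i)) t]
        exact Finset.sum_congr rfl fun i _ => by rw [hAxt i]; ring
      have hfeast : Real.sqrt (∑ i, (A.mulVec xt i - b i) ^ 2) ≤ σ := by
        rw [feas_iff, hres]
        have hW1 : 2 * t * W ≤ 2 * t * |W| := by
          have := le_abs_self W
          nlinarith
        have hW2 : t ^ 2 * Q ≤ t * Q := by nlinarith [mul_nonneg (mul_nonneg ht0.le hQnn) (sub_nonneg.mpr ht1)]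
        nlinarith
      have := hmin xt hfeast
      have hsq : ∑ i, (xt i) ^ 2 =
          ∑ i, (xstar i) ^ 2 + 2 * t * (-(∑ i, (xstar i) ^ 2)) + t ^ 2 * ∑ i, (xstar i) ^ 2 := by
        have h1 : ∑ i, (xt i) ^ 2 = ∑ i, (xstar i) ^ 2 + 2 * t * (∑ i, xstar i * (-(xstar i))) +
            t ^ 2 * ∑ i, (-(xstar i)) ^ 2 := aux_sum_sq_expand xstar (fun j => -(xstar j)) t
        have h2 : ∑ i, xstar i * (-(xstar i)) = -(∑ i, (xstar i) ^ 2) := by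
          rw [← Finset.sum_neg_distrib]; exact Finset.sum_congr rfl fun i _ => by ring
        have h3 : ∑ i, (-(xstar i)) ^ 2 = ∑ i, (xstar i) ^ 2 :=
          Finset.sum_congr rfl fun i _ => by ring
        rw [h1, h2, h3]
      have habs : ∑ i, |xt i| = (1 - t) * ∑ i, |xstar i| := by
        rw [Finset.mul_sum]
        refine Finset.sum_congr rfl fun i _ => ?_
        have : xt i = (1 - t) * xstar i := by rw [hxtd]; ring
        rw [this, abs_mul, abs_of_nonneg (by linarith : (0:ℝ) ≤ 1 - t)]
      rw [hsq, habs] at this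
      have hLnn : (0:ℝ) ≤ ∑ i, |xstar i| := Finset.sum_nonneg fun i _ => abs_nonneg _
      nlinarith [mul_nonneg hμ hLnn, mul_pos ht0 hS]
    refine ⟨by rw [hReq]; exact Real.sqrt_sq hσ.le, ?_⟩
    intro u hu
    set Su := {v : ℝ | ∃ ε, (∑ i, p ε i * xstar i) = (∑ i, |xstar i|) ∧
        v = ∑ i, p ε i * u i} with hSud
    have hfin : Su.Finite :=
      Set.Finite.subset (Set.finite_range (fun ε : Fin N → Bool => ∑ i, p ε i * u i))
        (by rintro v ⟨ε, _, rfl⟩; exact ⟨ε, rfl⟩)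
    have hne : Su.Nonempty := by
      obtain ⟨ε, hε⟩ := aux_sign_exists p hp xstar
      exact ⟨_, ε, hε, rfl⟩
    have hbdd : BddAbove Su := hfin.bddAbove
    set M := sSup Su with hMd
    set L := ∑ i, |xstar i| with hLd
    set K := ∑ i, |u i| with hKd
    have hKnn : (0:ℝ) ≤ K := Finset.sum_nonneg fun i _ => abs_nonneg _
    have hMm : M ∈ Su := hne.csSup_mem hfin
    have hMK : M ≤ K := by
      obtain ⟨ε, _, hv⟩ := hMm
      rw [hv]; exact aux_sign_le p hp u ε
    have hKM : -K ≤ M := by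
      obtain ⟨ε, _, hv⟩ := hMm
      rw [hv]; exact aux_sign_ge p hp u ε
    by_contra hcon
    push_neg at hcon
    -- Step A: uniform bound on sign sums of perturbed point
    obtain ⟨t0, ht0, hkey⟩ : ∃ t0 : ℝ, 0 < t0 ∧ ∀ t : ℝ, 0 < t → t ≤ t0 →
        ∀ ε, ∑ i, p ε i * (xstar i + t * u i) ≤ L + t * M := by
      have hsplit : ∀ (ε : Fin N → Bool) (t : ℝ),
          ∑ i, p ε i * (xstar i + t * u i) =
            (∑ i, p ε i * xstar i) + t * ∑ i, p ε i * u i := by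
        intro ε t
        rw [Finset.mul_sum, ← Finset.sum_add_distrib]
        exact Finset.sum_congr rfl fun i _ => by ring
      have hMε : ∀ ε, (∑ i, p ε i * xstar i) = L → ∑ i, p ε i * u i ≤ M :=
        fun ε hact => le_csSup hbdd ⟨ε, hact, rfl⟩
      set D := Finset.univ.filter (fun ε : Fin N → Bool => ∑ i, p ε i * xstar i ≠ L) with hDd
      rcases D.eq_empty_or_nonempty with hD | hD
      · refine ⟨1, one_pos, fun t ht _ ε => ?_⟩
        have hact : ∑ i, p ε i * xstar i = L := by
          by_contra hcon2
          have : ε ∈ D := Finset.mem_filter.2 ⟨Finset.mem_univ ε, hcon2⟩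
          rw [hD] at this
          exact absurd this (Finset.notMem_empty ε)
        rw [hsplit, hact]
        have h := hMε ε hact
        nlinarith [mul_le_mul_of_nonneg_left h ht.le]
      · set V := D.sup' hD (fun ε => ∑ i, p ε i * xstar i) with hVd
        have hVlt : V < L := by
          obtain ⟨ε₀, hε₀, hVv⟩ := Finset.exists_mem_eq_sup' hD
            (fun ε => ∑ i, p ε i * xstar i)
          rw [hVd, hVv]
          exact lt_of_le_of_ne (aux_sign_le p hp xstar ε₀) (Finset.mem_filter.1 hε₀).2
        refine ⟨(L - V) / (2 * K + 1), div_pos (by linarith) (by linarith),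
          fun t ht htle ε => ?_⟩
        rw [hsplit]
        by_cases hact : ∑ i, p ε i * xstar i = L
        · rw [hact]
          have h := hMε ε hact
          nlinarith [mul_le_mul_of_nonneg_left h ht.le]
        · have hεD : ε ∈ D := Finset.mem_filter.2 ⟨Finset.mem_univ ε, hact⟩
          have h1 : ∑ i, p ε i * xstar i ≤ V :=
            Finset.le_sup' (fun ε => ∑ i, p ε i * xstar i) hεD
          have h2 : ∑ i, p ε i * u i ≤ K := aux_sign_le p hp u ε
          have h3 : t * (2 * K + 1) ≤ L - V := by
            calc t * (2 * K + 1) ≤ (L - V) / (2 * K + 1) * (2 * K + 1) :=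
                  mul_le_mul_of_nonneg_right htle (by linarith)
              _ = L - V := div_mul_cancel₀ _ (by linarith)
          nlinarith [mul_le_mul_of_nonneg_left h2 ht.le,
            mul_le_mul_of_nonneg_left hKM ht.le, h3, h1, ht.le]
    -- Step B: feasibility of the perturbed point for small t
    obtain ⟨t1, ht1, hfeas1⟩ : ∃ t1 : ℝ, 0 < t1 ∧ ∀ t : ℝ, 0 < t → t ≤ t1 →
        ∑ i, (A.mulVec (fun j => xstar j + t * u j) i - b i) ^ 2 ≤ σ ^ 2 := by
      have hres : ∀ t : ℝ, ∑ i, (A.mulVec (fun j => xstar j + t * u j) i - b i) ^ 2 =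
          ∑ i, (A.mulVec xstar i - b i) ^ 2 +
            2 * t * ∑ i, (A.mulVec xstar i - b i) * A.mulVec u i +
            t ^ 2 * ∑ i, (A.mulVec u i) ^ 2 := by
        intro t
        rw [← aux_sum_sq_expand (fun i => A.mulVec xstar i - b i) (fun i => A.mulVec u i) t]
        exact Finset.sum_congr rfl fun i _ => by rw [aux_mulVec_lin]; ring
      rcases hu with hAu | hgneg
      · refine ⟨1, one_pos, fun t _ _ => ?_⟩
        rw [hres t, hReq]
        have h1 : ∑ i, (A.mulVec xstar i - b i) * A.mulVec u i = 0 := by simp [hAu]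
        have h2 : ∑ i, (A.mulVec u i) ^ 2 = 0 := by simp [hAu]
        rw [h1, h2]
        nlinarith
      · set gup := ∑ i, (A.mulVec xstar i - b i) * A.mulVec u i with hgupd
        have hgult : gup < 0 := by rw [hgupd, ← hgu u]; exact hgneg
        set Q := ∑ i, (A.mulVec u i) ^ 2 with hQd
        have hQnn : (0:ℝ) ≤ Q := Finset.sum_nonneg fun i _ => sq_nonneg _
        refine ⟨(-gup) / (Q + 1), div_pos (by linarith) (by linarith), fun t ht htl => ?_⟩
        rw [hres t, hReq]
        have h3 : t * (Q + 1) ≤ -gup := by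
          calc t * (Q + 1) ≤ (-gup) / (Q + 1) * (Q + 1) :=
                mul_le_mul_of_nonneg_right htl (by linarith)
            _ = -gup := div_mul_cancel₀ _ (by linarith)
        nlinarith [mul_le_mul_of_nonneg_left h3 ht.le, mul_nonneg ht.le hQnn,
          mul_pos ht (neg_pos.2 hgult)]
    -- Step C: contradiction
    set Q' := ∑ i, (u i) ^ 2 with hQ'd
    have hQ'nn : (0:ℝ) ≤ Q' := Finset.sum_nonneg fun i _ => sq_nonneg _
    set c := ∑ i, xstar i * u i + μ * M with hcd
    have hcneg : c < 0 := hcon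
    set t := min t0 (min t1 ((-c) / (Q' + 1))) with htd
    have htpos : 0 < t :=
      lt_min ht0 (lt_min ht1 (div_pos (by linarith) (by linarith)))
    have htt0 : t ≤ t0 := min_le_left _ _
    have htt1 : t ≤ t1 := le_trans (min_le_right _ _) (min_le_left _ _)
    have htc : t * (Q' + 1) ≤ -c := by
      have h := le_trans (min_le_right t0 (min t1 ((-c) / (Q' + 1))))
        (min_le_right t1 ((-c) / (Q' + 1)))
      calc t * (Q' + 1) ≤ (-c) / (Q' + 1) * (Q' + 1) :=
            mul_le_mul_of_nonneg_right h (by linarith)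
        _ = -c := div_mul_cancel₀ _ (by linarith)
    have hfeast : Real.sqrt (∑ i, (A.mulVec (fun j => xstar j + t * u j) i - b i) ^ 2) ≤ σ :=
      (feas_iff (fun j => xstar j + t * u j)).2 (hfeas1 t htpos htt1)
    have hobj := hmin (fun j => xstar j + t * u j) hfeast
    have hsq : ∑ i, (xstar i + t * u i) ^ 2 =
        ∑ i, (xstar i) ^ 2 + 2 * t * ∑ i, xstar i * u i + t ^ 2 * Q' :=
      aux_sum_sq_expand xstar u t
    have habs : ∑ i, |xstar i + t * u i| ≤ L + t * M := by
      obtain ⟨ε, hε⟩ := aux_sign_exists p hp (fun j => xstar j + t * u j)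
      rw [← hε]
      exact hkey t htpos htt0 ε
    rw [hsq] at hobj
    have hmu2 : μ * ∑ i, |xstar i + t * u i| ≤ μ * (L + t * M) :=
      mul_le_mul_of_nonneg_left habs hμ
    nlinarith [hobj, hmu2, mul_le_mul_of_nonneg_left htc htpos.le,
      mul_nonneg htpos.le hQ'nn, mul_pos htpos (by linarith : (0:ℝ) < -c)]
  · rintro ⟨heq, hcond⟩ x hx
    have hReq : ∑ i, (A.mulVec xstar i - b i) ^ 2 = σ ^ 2 := by
      rw [← heq, Real.sq_sqrt hRnn]
    have hx2 : ∑ i, (A.mulVec x i - b i) ^ 2 ≤ σ ^ 2 := (feas_iff x).1 hx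
    set u : Fin N → ℝ := fun j => x j - xstar j with hu
    have hxrw : x = fun j => xstar j + 1 * u j := funext fun j => by simp [hu]
    have hAx : ∀ i, A.mulVec x i = A.mulVec xstar i + 1 * A.mulVec u i := by
      intro i; rw [hxrw]; exact aux_mulVec_lin A xstar u 1 i
    have hres : ∑ i, (A.mulVec x i - b i) ^ 2 =
        ∑ i, (A.mulVec xstar i - b i) ^ 2 +
          2 * 1 * ∑ i, (A.mulVec xstar i - b i) * A.mulVec u i +
          1 ^ 2 * ∑ i, (A.mulVec u i) ^ 2 := by
      rw [← aux_sum_sq_expand (fun i => A.mulVec xstar i - b i) (fun i => A.mulVec u i) 1]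
      exact Finset.sum_congr rfl fun i _ => by rw [hAx i]; ring
    set gu := ∑ i, (A.mulVec xstar i - b i) * A.mulVec u i with hgud
    set Q := ∑ i, (A.mulVec u i) ^ 2 with hQd
    have hQnn : 0 ≤ Q := Finset.sum_nonneg fun i _ => sq_nonneg _
    have hkey : 2 * gu + Q ≤ 0 := by
      have := hx2
      rw [hres, hReq] at this
      linarith
    have hcu : 0 ≤ (∑ i, xstar i * u i) +
        μ * sSup {v : ℝ | ∃ ε, (∑ i, p ε i * xstar i) = (∑ i, |xstar i|) ∧
          v = ∑ i, p ε i * u i} := by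
      rcases lt_or_ge gu 0 with h | h
      · exact hcond u (Or.inr (by rw [hgu u]; exact h))
      · have hQ0 : Q = 0 := le_antisymm (by linarith) hQnn
        have hAu : A.mulVec u = 0 := by
          funext i
          have := (Finset.sum_eq_zero_iff_of_nonneg
            (fun i (_ : i ∈ Finset.univ) => sq_nonneg (A.mulVec u i))).1 hQ0 i (Finset.mem_univ i)
          simpa using pow_eq_zero_iff (two_ne_zero) |>.1 this
        exact hcond u (Or.inl hAu)
    -- facts about the sup set
    set Su := {v : ℝ | ∃ ε, (∑ i, p ε i * xstar i) = (∑ i, |xstar i|) ∧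
        v = ∑ i, p ε i * u i} with hSud
    have hfin : Su.Finite :=
      Set.Finite.subset (Set.finite_range (fun ε : Fin N → Bool => ∑ i, p ε i * u i))
        (by rintro v ⟨ε, _, rfl⟩; exact ⟨ε, rfl⟩)
    have hne : Su.Nonempty := by
      obtain ⟨ε, hε⟩ := aux_sign_exists p hp xstar
      exact ⟨_, ε, hε, rfl⟩
    obtain ⟨ε, hact, hMv⟩ := hne.csSup_mem hfin
    -- ∑ |x i| ≥ L + M
    have habs : ∑ i, |xstar i| + sSup Su ≤ ∑ i, |x i| := by
      have h1 : ∑ i, p ε i * x i = ∑ i, p ε i * xstar i + ∑ i, p ε i * u i := by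
        rw [← Finset.sum_add_distrib]
        exact Finset.sum_congr rfl fun i _ => by simp [hu]; ring
      have h2 := aux_sign_le p hp x ε
      rw [h1, hact] at h2
      rw [hMv]
      linarith
    -- objective expansion
    have hobj : ∑ i, (x i) ^ 2 =
        ∑ i, (xstar i) ^ 2 + 2 * 1 * ∑ i, xstar i * u i + 1 ^ 2 * ∑ i, (u i) ^ 2 := by
      rw [← aux_sum_sq_expand xstar u 1]
      exact Finset.sum_congr rfl fun i _ => by rw [congrFun hxrw i]
    have hQ'nn : (0:ℝ) ≤ ∑ i, (u i) ^ 2 := Finset.sum_nonneg fun i _ => sq_nonneg _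
    have hmu : μ * (∑ i, |xstar i| + sSup Su) ≤ μ * ∑ i, |x i| :=
      mul_le_mul_of_nonneg_left habs hμ
    rw [hobj]
    nlinarith [hcu, hQ'nn, hmu]
end

section
/- Consider the regularized BP-like problem min ‖Ex‖⋆ + (α/2)‖x‖₂² subject to Ax = b, Cx ≤ d, with α > 0 and b ∈ A𝒞 where 𝒞 = {x : Cx ≤ d}. Let x*(b) denote its unique minimizer. Then for any bounded set B ⊆ ℝ^m, the set {x*(b) : b ∈ A𝒞 ∩ B} is bounded. -/
open Filter Topology

/-- Boundedness of the minimizers of the regularized BP-like problem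
`min ‖Ex‖⋆ + (α/2)‖x‖₂² s.t. Ax = b, Cx ≤ d` as `b` ranges over a bounded set:
for any bounded `B ⊆ ℝ^m`, the set of minimizers corresponding to `b ∈ B`
(for those `b` where the problem is feasible) is bounded. -/
theorem stmt18 {m N r ℓc : ℕ}
    (nstar : (Fin r → ℝ) → ℝ)
    (hns1 : ∀ u v, nstar (u + v) ≤ nstar u + nstar v)
    (hns2 : ∀ (c : ℝ) u, nstar (c • u) = |c| * nstar u)
    (hns3 : ∀ u, nstar u = 0 → u = 0)
    (α : ℝ) (hα : 0 < α)
    (A : Matrix (Fin m) (Fin N) ℝ) (hA : A ≠ 0)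
    (E : Matrix (Fin r) (Fin N) ℝ)
    (Cm : Matrix (Fin ℓc) (Fin N) ℝ) (d : Fin ℓc → ℝ)
    (𝒞 : Set (Fin N → ℝ)) (h𝒞 : 𝒞 = {x | ∀ i, Cm.mulVec x i ≤ d i})
    (J : (Fin N → ℝ) → ℝ)
    (hJ : J = fun x => nstar (E.mulVec x) + α / 2 * ∑ j, (x j) ^ 2) :
    ∀ B : Set (Fin m → ℝ), Bornology.IsBounded B →
      ∃ M : ℝ, ∀ b ∈ B, ∀ x,
        (A.mulVec x = b ∧ x ∈ 𝒞 ∧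
          ∀ y, A.mulVec y = b → y ∈ 𝒞 → J x ≤ J y) →
        Real.sqrt (∑ j, (x j) ^ 2) ≤ M := by
  subst h𝒞 hJ
  intro B hB
  by_contra hcon
  push_neg at hcon
  -- choose a sequence of counterexamples
  choose b hbB x hx hgt using fun n : ℕ => hcon (n : ℝ)
  obtain ⟨R, hR⟩ := isBounded_iff_forall_norm_le.mp hB
  -- the quadratic form
  set Q : (Fin N → ℝ) → ℝ := fun v => ∑ j, (v j) ^ 2 with hQdef
  have hQnonneg : ∀ v, 0 ≤ Q v := fun v => Finset.sum_nonneg fun j _ => sq_nonneg _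
  set rr : ℕ → ℝ := fun n => Real.sqrt (Q (x n)) with hrrdef
  have hrgt : ∀ n : ℕ, (n : ℝ) < rr n := fun n => hgt n
  have hrpos : ∀ n, 0 < rr n := fun n => lt_of_le_of_lt (Nat.cast_nonneg n) (hrgt n)
  have hrsq : ∀ n, Q (x n) = rr n ^ 2 := fun n => (Real.sq_sqrt (hQnonneg _)).symm
  set z : ℕ → (Fin N → ℝ) := fun n => (rr n)⁻¹ • x n with hzdef
  have hxz : ∀ n, x n = rr n • z n := by
    intro n
    simp [hzdef, smul_smul, mul_inv_cancel₀ (hrpos n).ne']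
  have hQz : ∀ n, Q (z n) = 1 := by
    intro n
    have : Q (z n) = (rr n)⁻¹ ^ 2 * Q (x n) := by
      simp only [hQdef, hzdef, Pi.smul_apply, smul_eq_mul, mul_pow, Finset.mul_sum]
    rw [this, hrsq n, inv_pow, inv_mul_cancel₀ (pow_ne_zero 2 (hrpos n).ne')]
  -- z n lies in the compact unit ball (sup norm)
  have hzball : ∀ n, z n ∈ Metric.closedBall (0 : Fin N → ℝ) 1 := by
    intro n
    rw [Metric.mem_closedBall, dist_zero_right]
    rw [pi_norm_le_iff_of_nonneg zero_le_one]
    intro j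
    have h1 : (z n j) ^ 2 ≤ Q (z n) :=
      Finset.single_le_sum (f := fun j => (z n j) ^ 2) (fun j _ => sq_nonneg _)
        (Finset.mem_univ j)
    rw [hQz n] at h1
    simpa [Real.norm_eq_abs] using (sq_le_one_iff_abs_le_one _).mp h1
  obtain ⟨z₀, -, φ, hφ, htend⟩ :=
    (isCompact_closedBall (0 : Fin N → ℝ) 1).tendsto_subseq hzball
  -- coordinatewise convergence and linear-functional convergence
  have hcoord : ∀ j, Tendsto (fun n => z (φ n) j) atTop (𝓝 (z₀ j)) := by
    intro j
    exact ((continuous_apply j).tendsto z₀).comp htend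
  have hlin : ∀ w : Fin N → ℝ,
      Tendsto (fun n => ∑ j, w j * z (φ n) j) atTop (𝓝 (∑ j, w j * z₀ j)) := by
    intro w
    exact tendsto_finset_sum _ fun j _ => (hcoord j).const_mul (w j)
  -- rr (φ n) tends to atTop
  have hrtop : Tendsto (fun n => rr (φ n)) atTop atTop := by
    apply tendsto_atTop_mono (f := fun n : ℕ => (n : ℝ))
    · intro n
      calc (n : ℝ) ≤ (φ n : ℝ) := by exact_mod_cast hφ.le_apply
        _ ≤ rr (φ n) := (hrgt (φ n)).le
    · exact tendsto_natCast_atTop_atTop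
  have hrinv : Tendsto (fun n => (rr (φ n))⁻¹) atTop (𝓝 0) :=
    tendsto_inv_atTop_zero.comp hrtop
  -- A z₀ = 0
  have hAz₀ : A.mulVec z₀ = 0 := by
    funext i
    have h1 : Tendsto (fun n => A.mulVec (z (φ n)) i) atTop (𝓝 (A.mulVec z₀ i)) := by
      simpa only [Matrix.mulVec, dotProduct] using hlin (A i)
    have h2 : Tendsto (fun n => A.mulVec (z (φ n)) i) atTop (𝓝 0) := by
      apply squeeze_zero_norm (a := fun n => |R| * (rr (φ n))⁻¹)
      · intro n
        have hAzv : A.mulVec (z (φ n)) i = (rr (φ n))⁻¹ * A.mulVec (x (φ n)) i := by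
          rw [hzdef]
          simp [Matrix.mulVec_smul]
        rw [Real.norm_eq_abs, hAzv, (hx (φ n)).1, abs_mul,
          abs_inv, abs_of_pos (hrpos (φ n))]
        rw [mul_comm]
        apply mul_le_mul_of_nonneg_right _ (inv_nonneg.mpr (hrpos (φ n)).le)
        calc |b (φ n) i| = ‖b (φ n) i‖ := rfl
          _ ≤ ‖b (φ n)‖ := norm_le_pi_norm _ i
          _ ≤ R := hR _ (hbB (φ n))
          _ ≤ |R| := le_abs_self R
      · simpa using hrinv.const_mul |R|
    simpa using tendsto_nhds_unique h1 h2
  -- Cm z₀ ≤ 0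
  have hCz₀ : ∀ i, Cm.mulVec z₀ i ≤ 0 := by
    intro i
    have h1 : Tendsto (fun n => Cm.mulVec (z (φ n)) i) atTop (𝓝 (Cm.mulVec z₀ i)) := by
      simpa only [Matrix.mulVec, dotProduct] using hlin (Cm i)
    have h2 : Tendsto (fun n => (rr (φ n))⁻¹ * d i) atTop (𝓝 0) := by
      simpa using hrinv.mul_const (d i)
    refine le_of_tendsto_of_tendsto h1 h2 ?_
    filter_upwards with n
    have hCzv : Cm.mulVec (z (φ n)) i = (rr (φ n))⁻¹ * Cm.mulVec (x (φ n)) i := by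
      rw [hzdef]; simp [Matrix.mulVec_smul]
    rw [hCzv]
    exact mul_le_mul_of_nonneg_left ((hx (φ n)).2.1 i)
      (inv_nonneg.mpr (hrpos (φ n)).le)
  -- Q z₀ = 1
  have hQz₀ : Q z₀ = 1 := by
    have hQtend : Tendsto (fun n => Q (z (φ n))) atTop (𝓝 (Q z₀)) :=
      tendsto_finset_sum _ fun j _ => (hcoord j).pow 2
    rw [show (fun n => Q (z (φ n))) = fun _ => (1 : ℝ) from funext fun n => hQz _] at hQtend
    exact tendsto_nhds_unique hQtend tendsto_const_nhds
  -- the inner products ⟨x (φ n), z₀⟩ tend to atTop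
  have hs : Tendsto (fun n => ∑ j, z (φ n) j * z₀ j) atTop (𝓝 1) := by
    have h1 : Tendsto (fun n => ∑ j, z₀ j * z (φ n) j) atTop (𝓝 (∑ j, z₀ j * z₀ j)) :=
      hlin z₀
    have h2 : (∑ j, z₀ j * z₀ j) = 1 := by
      rw [← hQz₀]; simp only [hQdef, sq]
    rw [h2] at h1
    convert h1 using 2 with n
    exact Finset.sum_congr rfl fun j _ => mul_comm _ _
  have hip : Tendsto (fun n => ∑ j, x (φ n) j * z₀ j) atTop atTop := by
    have heq : (fun n => ∑ j, x (φ n) j * z₀ j)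
        = fun n => rr (φ n) * ∑ j, z (φ n) j * z₀ j := by
      funext n
      rw [Finset.mul_sum]
      refine Finset.sum_congr rfl fun j _ => ?_
      rw [hxz (φ n)]
      simp [mul_assoc]
    rw [heq]
    exact Tendsto.atTop_mul_pos one_pos hrtop hs
  -- eventual feasibility of x (φ n) - z₀
  have hfeas : ∀ᶠ n in atTop, ∀ i, Cm.mulVec (x (φ n) - z₀) i ≤ d i := by
    rw [eventually_all]
    intro i
    rcases eq_or_lt_of_le (hCz₀ i) with hc0 | hcneg
    · filter_upwards with n
      rw [Matrix.mulVec_sub, Pi.sub_apply, hc0, sub_zero]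
      exact (hx (φ n)).2.1 i
    · -- Cm z₀ i < 0
      set c := Cm.mulVec z₀ i with hcdef
      have h1 : Tendsto (fun n => Cm.mulVec (z (φ n)) i) atTop (𝓝 c) := by
        simpa only [Matrix.mulVec, dotProduct, hcdef] using hlin (Cm i)
      have hev1 : ∀ᶠ n in atTop, Cm.mulVec (z (φ n)) i ≤ c / 2 :=
        h1.eventually_le_const (by linarith)
      have h2 : Tendsto (fun n => rr (φ n) * (c / 2)) atTop atBot :=
        hrtop.atTop_mul_const_of_neg (by linarith)
      have hev2 : ∀ᶠ n in atTop, rr (φ n) * (c / 2) ≤ d i + c :=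
        h2.eventually_le_atBot (d i + c)
      filter_upwards [hev1, hev2] with n h1' h2'
      have hCxv : Cm.mulVec (x (φ n)) i = rr (φ n) * Cm.mulVec (z (φ n)) i := by
        rw [hxz (φ n)]; simp [Matrix.mulVec_smul]
      rw [Matrix.mulVec_sub, Pi.sub_apply, hCxv, ← hcdef]
      have : rr (φ n) * Cm.mulVec (z (φ n)) i ≤ rr (φ n) * (c / 2) :=
        mul_le_mul_of_nonneg_left h1' (hrpos (φ n)).le
      linarith
  -- eventual largeness of the inner product
  have hbig : ∀ᶠ n in atTop,
      nstar (E.mulVec z₀) + α / 2 < α * ∑ j, x (φ n) j * z₀ j := by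
    have h1 : Tendsto (fun n => α * ∑ j, x (φ n) j * z₀ j) atTop atTop := by
      have := hip.const_mul_atTop hα
      simpa using this
    exact h1.eventually_gt_atTop _
  obtain ⟨n, hfeasn, hbign⟩ := (hfeas.and hbig).exists
  -- derive the contradiction at index n
  set X := x (φ n) with hXdef
  set ip := ∑ j, X j * z₀ j with hipdef
  have hmin := (hx (φ n)).2.2 (X - z₀) (by rw [Matrix.mulVec_sub, hAz₀, sub_zero, (hx (φ n)).1]) hfeasn
  -- expand J
  have hQexp : Q (X - z₀) = Q X - 2 * ip + 1 := by
    have h1 : ∀ j, (X j - z₀ j) ^ 2 = X j ^ 2 - 2 * (X j * z₀ j) + z₀ j ^ 2 := fun j => by ring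
    simp only [hQdef, Pi.sub_apply]
    calc (∑ j, (X j - z₀ j) ^ 2)
        = ∑ j, (X j ^ 2 - 2 * (X j * z₀ j) + z₀ j ^ 2) :=
          Finset.sum_congr rfl fun j _ => h1 j
      _ = (∑ j, X j ^ 2) - 2 * (∑ j, X j * z₀ j) + ∑ j, z₀ j ^ 2 := by
          rw [Finset.sum_add_distrib, Finset.sum_sub_distrib, Finset.mul_sum]
      _ = (∑ j, X j ^ 2) - 2 * ip + 1 := by
          rw [← hipdef, show (∑ j, z₀ j ^ 2) = 1 from hQz₀]
  have hnsub : nstar (E.mulVec (X - z₀)) ≤ nstar (E.mulVec X) + nstar (E.mulVec z₀) := by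
    rw [Matrix.mulVec_sub, sub_eq_add_neg]
    refine le_trans (hns1 _ _) ?_
    have : nstar (-(E.mulVec z₀)) = nstar (E.mulVec z₀) := by
      rw [← neg_one_smul ℝ (E.mulVec z₀), hns2]
      simp
    rw [this]
  have hminX : nstar (E.mulVec X) + α / 2 * Q X
      ≤ nstar (E.mulVec (X - z₀)) + α / 2 * Q (X - z₀) := hmin
  rw [hQexp] at hminX
  have : α * ip ≤ nstar (E.mulVec z₀) + α / 2 := by nlinarith [hnsub, hminX]
  linarith
end
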